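/- arXiv:2303.01964 — 8 statements merged into one kernel-verified Lean document; each statement's English description precedes it below -/
import Mathlib

section
/- Let G_{n,x} (with 1 ≤ x ≤ n-2) be the graph obtained from K_{n-1} by adding a new vertex adjacent to exactly x vertices of K_{n-1}. Then N(G_{n,x}) = 2^{n-1} - 1 + 1 + 2^{n-1} - 2^{n-1-x} = 2^n - 2^{n-1-x}, and in particular N(G_{n,x}) is strictly increasing in x for 1 ≤ x ≤ n-2. -/
open SimpleGraph

/-- Number of nonempty vertex subsets inducing a connected subgraph. -/
noncomputable def numConnSub {V : Type*} [Fintype V] (G : SimpleGraph V) : ℕ :=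
  Set.ncard {S : Set V | S.Nonempty ∧ (G.induce S).Connected}

/-- Number of vertex subsets containing `u` inducing a connected subgraph. -/
noncomputable def numConnSubAt {V : Type*} [Fintype V] (G : SimpleGraph V) (u : V) : ℕ :=
  Set.ncard {S : Set V | u ∈ S ∧ (G.induce S).Connected}

/-- The graph `G_{n,x}` with `n = m + 1`: a complete graph on `Fin m` together with an extra
vertex `none` adjacent to exactly `x` of its vertices. -/
def Gnd (m x : ℕ) : SimpleGraph (Option (Fin m)) :=
  SimpleGraph.fromRel (fun a b =>
    match a, b with
    | some _, some _ => True
    | none, some i => i.val < x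
    | some i, none => i.val < x
    | none, none => False)

lemma Gnd_adj_ss {m x : ℕ} {i j : Fin m} :
    (Gnd m x).Adj (some i) (some j) ↔ i ≠ j := by
  simp [Gnd, SimpleGraph.fromRel_adj]

lemma Gnd_adj_ns {m x : ℕ} {i : Fin m} :
    (Gnd m x).Adj none (some i) ↔ i.val < x := by
  simp [Gnd, SimpleGraph.fromRel_adj]

lemma Gnd_conn_iff {m x : ℕ} (S : Set (Option (Fin m))) (hS : S.Nonempty) :
    ((Gnd m x).induce S).Connected ↔
      ¬ (none ∈ S ∧ (∃ i : Fin m, some i ∈ S) ∧ ∀ i : Fin m, some i ∈ S → x ≤ i.val) := by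
  constructor
  · rintro hc ⟨hn, ⟨i, hi⟩, hall⟩
    have hr := hc.preconnected ⟨none, hn⟩ ⟨some i, hi⟩
    obtain ⟨w⟩ := hr
    cases w with
    | cons h p =>
      rename_i b
      have hadj : (Gnd m x).Adj none b.val := h
      match hb : b.val with
      | none => rw [hb] at hadj; exact (Gnd m x).irrefl hadj
      | some j =>
        rw [hb] at hadj
        have : (j : ℕ) < x := Gnd_adj_ns.mp hadj
        have : x ≤ (j : ℕ) := hall j (hb ▸ b.2)
        omega
  · intro hbad
    push_neg at hbad
    rw [SimpleGraph.connected_iff]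
    refine ⟨?_, ⟨⟨hS.choose, hS.choose_spec⟩⟩⟩
    by_cases hn : none ∈ S
    · by_cases hex : ∃ i : Fin m, some i ∈ S
      · obtain ⟨j, hj, hjx⟩ := hbad hn hex
        have key : ∀ a : S, ((Gnd m x).induce S).Reachable ⟨some j, hj⟩ a := by
          rintro ⟨a, ha⟩
          match a with
          | none =>
            refine SimpleGraph.Adj.reachable ?_
            show (Gnd m x).Adj (some j) none
            exact (Gnd m x).adj_symm (Gnd_adj_ns.mpr hjx)
          | some k =>
            by_cases hk : k = j
            · subst hk; rfl
            · refine SimpleGraph.Adj.reachable ?_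
              show (Gnd m x).Adj (some j) (some k)
              exact Gnd_adj_ss.mpr (Ne.symm hk)
        intro a b
        exact (key a).symm.trans (key b)
      · push_neg at hex
        intro a b
        have ha : a.val = none := by
          match h : a.val with
          | none => rfl
          | some i => exact absurd (h ▸ a.2) (hex i)
        have hb : b.val = none := by
          match h : b.val with
          | none => rfl
          | some i => exact absurd (h ▸ b.2) (hex i)
        have : a = b := Subtype.ext (ha.trans hb.symm)
        subst this; rfl
    · intro a b
      by_cases hab : a = b
      · subst hab; rfl
      · obtain ⟨i, hi⟩ : ∃ i : Fin m, a.val = some i := by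
          match h : a.val with
          | none => exact absurd (h ▸ a.2) hn
          | some i => exact ⟨i, rfl⟩
        obtain ⟨j, hj⟩ : ∃ j : Fin m, b.val = some j := by
          match h : b.val with
          | none => exact absurd (h ▸ b.2) hn
          | some j => exact ⟨j, rfl⟩
        have hij : i ≠ j := by
          rintro rfl
          exact hab (Subtype.ext (hi.trans hj.symm))
        refine SimpleGraph.Adj.reachable ?_
        show (Gnd m x).Adj a.val b.val
        rw [hi, hj]
        exact Gnd_adj_ss.mpr hij

lemma ncard_nonempty_sets (V : Type*) [Fintype V] :
    Set.ncard {S : Set V | S.Nonempty} = 2 ^ Fintype.card V - 1 := by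
  have h1 : {S : Set V | S.Nonempty} = Set.univ \ {∅} := by
    ext S
    simp [Set.nonempty_iff_ne_empty]
  rw [h1, Set.ncard_diff (by simp), Set.ncard_univ, Set.ncard_singleton,
    Nat.card_eq_fintype_card, Fintype.card_set]

lemma card_subtype_le (m x : ℕ) : Fintype.card {i : Fin m // x ≤ i.val} = m - x := by
  have e : {i : Fin m // x ≤ i.val} ≃ Fin (m - x) :=
    { toFun := fun i => ⟨i.val.val - x, by have h1 := i.1.isLt; have h2 := i.2; omega⟩
      invFun := fun j => ⟨⟨j.val + x, by have := j.isLt; omega⟩, by simp⟩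
      left_inv := fun i => by
        ext
        simp only []
        omega
      right_inv := fun j => by
        ext
        simp only []
        omega }
  rw [Fintype.card_congr e, Fintype.card_fin]

def badEquiv (m x : ℕ) :
    {S : Set (Option (Fin m)) | none ∈ S ∧ (∃ i : Fin m, some i ∈ S) ∧
        ∀ i : Fin m, some i ∈ S → x ≤ i.val}
    ≃ {T : Set {i : Fin m // x ≤ i.val} | T.Nonempty} where
  toFun S := ⟨{b | some b.val ∈ S.val}, by
    obtain ⟨i, hi⟩ := S.2.2.1
    exact ⟨⟨i, S.2.2.2 i hi⟩, hi⟩⟩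
  invFun T := ⟨insert none ((fun b : {i : Fin m // x ≤ i.val} => some b.val) '' T.val), by
    refine ⟨Set.mem_insert _ _, ?_, ?_⟩
    · obtain ⟨b, hb⟩ := T.2
      exact ⟨b.val, Set.mem_insert_of_mem _ ⟨b, hb, rfl⟩⟩
    · intro i hi
      rcases Set.mem_insert_iff.mp hi with h | ⟨b, _, hbe⟩
      · simp at h
      · have : b.val = i := by simpa using hbe
        exact this ▸ b.2⟩
  left_inv := by
    rintro ⟨S, hS⟩
    apply Subtype.ext
    ext a
    match a with
    | none => simp [hS.1]
    | some i =>
      simp only [Set.mem_insert_iff, Set.mem_image, Set.mem_setOf_eq]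
      constructor
      · rintro (h | ⟨b, hb, hbe⟩)
        · simp at h
        · have : b.val = i := by simpa using hbe
          exact this ▸ hb
      · intro h
        exact Or.inr ⟨⟨i, hS.2.2 i h⟩, h, rfl⟩
  right_inv := by
    rintro ⟨T, hT⟩
    apply Subtype.ext
    ext b
    simp only [Set.mem_setOf_eq, Set.mem_insert_iff, Set.mem_image]
    constructor
    · rintro (h | ⟨b', hb', hbe⟩)
      · simp at h
      · have : b' = b := Subtype.ext (by simpa using hbe)
        exact this ▸ hb'
    · intro h
      exact Or.inr ⟨b, h, rfl⟩

lemma numConnSub_Gnd_eq (m x : ℕ) :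
    numConnSub (Gnd m x) = (2 ^ (m + 1) - 1) - (2 ^ (m - x) - 1) := by
  classical
  unfold numConnSub
  have hset : {S : Set (Option (Fin m)) | S.Nonempty ∧ ((Gnd m x).induce S).Connected}
      = {S : Set (Option (Fin m)) | S.Nonempty} \
        {S : Set (Option (Fin m)) | none ∈ S ∧ (∃ i : Fin m, some i ∈ S) ∧
          ∀ i : Fin m, some i ∈ S → x ≤ i.val} := by
    ext S
    simp only [Set.mem_diff, Set.mem_setOf_eq]
    constructor
    · rintro ⟨h1, h2⟩
      exact ⟨h1, (Gnd_conn_iff S h1).mp h2⟩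
    · rintro ⟨h1, h2⟩
      exact ⟨h1, (Gnd_conn_iff S h1).mpr h2⟩
  have hsub : {S : Set (Option (Fin m)) | none ∈ S ∧ (∃ i : Fin m, some i ∈ S) ∧
      ∀ i : Fin m, some i ∈ S → x ≤ i.val} ⊆ {S : Set (Option (Fin m)) | S.Nonempty} :=
    fun S hS => ⟨none, hS.1⟩
  rw [hset, Set.ncard_diff hsub (Set.toFinite _)]
  congr 1
  · rw [ncard_nonempty_sets]
    simp
  · rw [← Nat.card_coe_set_eq, Nat.card_congr (badEquiv m x),
      Nat.card_coe_set_eq, ncard_nonempty_sets, card_subtype_le]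

/-- `N(G_{n,x}) = 2^n - 2^(n-1-x)`, and `N(G_{n,x})` is strictly increasing in `x`
for `1 ≤ x ≤ n - 2`. -/
theorem numConnSub_Gnd (n : ℕ) :
    (∀ x, 1 ≤ x → x ≤ n - 2 →
      numConnSub (Gnd (n - 1) x) = 2 ^ n - 2 ^ (n - 1 - x)) ∧
    (∀ x y, 1 ≤ x → x < y → y ≤ n - 2 →
      numConnSub (Gnd (n - 1) x) < numConnSub (Gnd (n - 1) y)) := by
  have main : ∀ x, 1 ≤ x → x ≤ n - 2 →
      numConnSub (Gnd (n - 1) x) = 2 ^ n - 2 ^ (n - 1 - x) := by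
    intro x hx1 hx2
    have hn : 3 ≤ n := by omega
    rw [numConnSub_Gnd_eq]
    have h1 : n - 1 + 1 = n := by omega
    rw [h1]
    have h2 : 2 ^ (n - 1 - x) ≤ 2 ^ n := Nat.pow_le_pow_right (by norm_num) (by omega)
    have h3 : 1 ≤ 2 ^ (n - 1 - x) := Nat.one_le_two_pow
    have h4 : 1 ≤ 2 ^ n := Nat.one_le_two_pow
    omega
  refine ⟨main, ?_⟩
  intro x y hx1 hxy hy2
  rw [main x hx1 (by omega), main y (by omega) hy2]
  have h2 : 2 ^ (n - 1 - x) ≤ 2 ^ n := Nat.pow_le_pow_right (by norm_num) (by omega)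
  have h5 : 2 ^ (n - 1 - y) < 2 ^ (n - 1 - x) :=
    Nat.pow_lt_pow_right (by norm_num) (by omega)
  omega
end

section
/- Let G be a graph of order n with minimum degree δ ≤ n-2, and let G_{n,δ} be the graph obtained from K_{n-1} by adding one vertex adjacent to exactly δ vertices of K_{n-1}. If G is not isomorphic to G_{n,δ}, then N(G) < N(G_{n,δ}). -/
open SimpleGraph

section Aux
set_option linter.unusedSectionVars false
variable {V : Type*} [Fintype V]


lemma aux_conn_clique (G : SimpleGraph V) (S : Set V) (hne : S.Nonempty)
    (h : ∀ a ∈ S, ∀ b ∈ S, a ≠ b → G.Adj a b) : (G.induce S).Connected := by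
  obtain ⟨a, ha⟩ := hne
  rw [connected_iff]
  refine ⟨fun v w => ?_, ⟨⟨a, ha⟩⟩⟩
  by_cases hvw : v = w
  · exact hvw ▸ Reachable.refl v
  · exact Adj.reachable (by
      simp only [comap_adj, Function.Embedding.coe_subtype]
      exact h v.1 v.2 w.1 w.2 (fun he => hvw (Subtype.ext he)))

lemma aux_disconn (G : SimpleGraph V) (S : Set V) (u t : V) (hu : u ∈ S) (ht : t ∈ S)
    (htu : t ≠ u) (h : ∀ v ∈ S, ¬G.Adj u v) : ¬(G.induce S).Connected := by
  intro hc
  have key : ∀ x : ↥S, (G.induce S).Reachable ⟨u, hu⟩ x → x = ⟨u, hu⟩ := by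
    rintro x ⟨w⟩
    cases w with
    | nil => rfl
    | cons hadj p =>
      exact absurd (by simpa using hadj : G.Adj u _) (h _ (by exact (Subtype.mem _)))
  have := key ⟨t, ht⟩ (hc.preconnected _ _)
  exact htu (congrArg Subtype.val this)

lemma aux_conn_hub (G : SimpleGraph V) (S : Set V) (u a : V) (hu : u ∈ S) (ha : a ∈ S)
    (hadj : G.Adj u a) (hcl : ∀ b ∈ S, b ≠ u → b ≠ a → G.Adj a b) :
    (G.induce S).Connected := by
  rw [connected_iff]
  have reach : ∀ v : ↥S, (G.induce S).Reachable v ⟨a, ha⟩ := by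
    rintro ⟨v, hv⟩
    by_cases hva : v = a
    · subst hva; exact Reachable.refl _
    by_cases hvu : v = u
    · subst hvu
      exact Adj.reachable (by simpa using hadj)
    · exact Adj.reachable (by
        simp only [comap_adj, Function.Embedding.coe_subtype]
        exact (hcl v hv hvu hva).symm)
  exact ⟨fun v w => (reach v).trans (reach w).symm, ⟨⟨a, ha⟩⟩⟩
open SimpleGraph
set_option linter.unusedSectionVars false

variable {V : Type*} [Fintype V]

noncomputable def Dcount (G : SimpleGraph V) : ℕ :=
  Set.ncard {S : Set V | S.Nonempty ∧ ¬(G.induce S).Connected}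


lemma ncard_setOf_nonempty : {S : Set V | S.Nonempty}.ncard = 2 ^ Fintype.card V - 1 := by
  have h1 : {S : Set V | S.Nonempty} = (Set.univ : Set (Set V)) \ {∅} := by
    ext S; simp [Set.nonempty_iff_ne_empty]
  rw [h1, Set.ncard_diff_singleton_of_mem (Set.mem_univ _), Set.ncard_univ,
    Nat.card_eq_fintype_card, Fintype.card_set]

lemma sum_eq (G : SimpleGraph V) :
    numConnSub G + Dcount G = 2 ^ Fintype.card V - 1 := by
  rw [← ncard_setOf_nonempty (V := V)]
  rw [numConnSub, Dcount,
    ← Set.ncard_union_eq (by rw [Set.disjoint_left]; rintro S ⟨-, hc⟩ ⟨-, hnc⟩; exact hnc hc)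
      (Set.toFinite _) (Set.toFinite _)]
  congr 1
  ext S
  simp only [Set.mem_union, Set.mem_setOf_eq]
  constructor
  · rintro (⟨h, -⟩ | ⟨h, -⟩) <;> exact h
  · intro h; by_cases hc : (G.induce S).Connected
    · exact Or.inl ⟨h, hc⟩
    · exact Or.inr ⟨h, hc⟩

lemma ncard_nonempty_subsets (B : Set V) :
    {T : Set V | T ⊆ B ∧ T.Nonempty}.ncard = 2 ^ B.ncard - 1 := by
  have h1 : {T : Set V | T ⊆ B ∧ T.Nonempty} = {T : Set V | T ⊆ B} \ {∅} := by
    ext T; simp [Set.nonempty_iff_ne_empty, and_comm]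
  have h2 : {T : Set V | T ⊆ B}.ncard = 2 ^ B.ncard := by
    have e : {T : Set V | T ⊆ B} ≃ Set ↥B := Equiv.Set.powerset B
    classical
    rw [← Nat.card_coe_set_eq, Nat.card_congr e, Nat.card_eq_fintype_card,
      Fintype.card_set, ← Nat.card_eq_fintype_card, Nat.card_coe_set_eq]
  rw [h1, Set.ncard_diff_singleton_of_mem (by simp), h2]

-- upper bound on Dcount when V \ {u} is a clique
lemma Dcount_le (G : SimpleGraph V) (u : V)
    (hcl : ∀ a b : V, a ≠ u → b ≠ u → a ≠ b → G.Adj a b) :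
    Dcount G ≤ 2 ^ ({v : V | v ≠ u ∧ ¬G.Adj u v}.ncard) - 1 := by
  set B : Set V := {v : V | v ≠ u ∧ ¬G.Adj u v} with hB
  have hsub : {S : Set V | S.Nonempty ∧ ¬(G.induce S).Connected} ⊆
      (fun T => insert u T) '' {T : Set V | T ⊆ B ∧ T.Nonempty} := by
    rintro S ⟨hne, hnc⟩
    -- u ∈ S
    have huS : u ∈ S := by
      by_contra huS
      exact hnc (aux_conn_clique G S hne (fun a ha b hb hab =>
        hcl a b (fun h => huS (h ▸ ha)) (fun h => huS (h ▸ hb)) hab))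
    -- S \ {u} nonempty
    have hdne : (S \ {u}).Nonempty := by
      by_contra hd
      rw [Set.not_nonempty_iff_eq_empty, Set.diff_eq_empty] at hd
      have hSu : S = {u} := le_antisymm hd (by simpa using huS)
      exact hnc (aux_conn_clique G S hne (by rintro a ha b hb hab
                                             rw [hSu] at ha hb
                                             exact absurd (ha.trans hb.symm) hab))
    -- no neighbor of u in S
    have hno : ∀ v ∈ S \ {u}, ¬G.Adj u v := by
      intro v hv hadj
      exact hnc (aux_conn_hub G S u v huS hv.1 hadj
        (fun b hb hbu hbv => hcl v b (by simpa using hv.2) hbu (Ne.symm hbv)))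
    refine ⟨S \ {u}, ⟨?_, hdne⟩, by simp [Set.insert_diff_singleton, huS]⟩
    intro v hv
    exact ⟨by simpa using hv.2, hno v hv⟩
  calc Dcount G ≤ ((fun T => insert u T) '' {T : Set V | T ⊆ B ∧ T.Nonempty}).ncard :=
        Set.ncard_le_ncard hsub (Set.toFinite _)
    _ ≤ {T : Set V | T ⊆ B ∧ T.Nonempty}.ncard := Set.ncard_image_le (Set.toFinite _)
    _ = 2 ^ B.ncard - 1 := ncard_nonempty_subsets B

-- lower bound on Dcount with a non-adjacent pair away from u
lemma Dcount_ge (G : SimpleGraph V) (u x y : V) (hx : x ≠ u) (hy : y ≠ u) (hxy : x ≠ y)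
    (hnadj : ¬G.Adj x y) :
    2 ^ ({v : V | v ≠ u ∧ ¬G.Adj u v}.ncard) ≤ Dcount G := by
  set B : Set V := {v : V | v ≠ u ∧ ¬G.Adj u v} with hB
  have huB : u ∉ B := fun h => h.1 rfl
  have hinj : Set.InjOn (fun T => insert u T) {T : Set V | T ⊆ B ∧ T.Nonempty} := by
    rintro T1 ⟨h1, -⟩ T2 ⟨h2, -⟩ he
    simp only at he
    have k1 : u ∉ T1 := fun h => huB (h1 h)
    have k2 : u ∉ T2 := fun h => huB (h2 h)
    rw [← Set.insert_diff_self_of_notMem k1, ← Set.insert_diff_self_of_notMem k2, he]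
  have hsub : (fun T => insert u T) '' {T : Set V | T ⊆ B ∧ T.Nonempty} ∪ {{x, y}} ⊆
      {S : Set V | S.Nonempty ∧ ¬(G.induce S).Connected} := by
    rintro S (⟨T, ⟨hTB, t, ht⟩, rfl⟩ | hS)
    · refine ⟨⟨u, Set.mem_insert _ _⟩, aux_disconn G _ u t (Set.mem_insert _ _)
        (Set.mem_insert_of_mem _ ht) (hTB ht).1 ?_⟩
      rintro v (rfl | hv)
      · exact G.loopless.irrefl _
      · exact (hTB hv).2
    · rw [Set.mem_singleton_iff] at hS
      subst hS
      refine ⟨⟨x, Set.mem_insert _ _⟩, aux_disconn G _ x y (Set.mem_insert _ _)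
        (by simp) hxy.symm ?_⟩
      rintro v (rfl | hv)
      · exact G.loopless.irrefl _
      · simp only [Set.mem_singleton_iff] at hv; subst hv; exact hnadj
  have hdisj : Disjoint ((fun T => insert u T) '' {T : Set V | T ⊆ B ∧ T.Nonempty})
      ({{x, y}} : Set (Set V)) := by
    rw [Set.disjoint_right]
    rintro S hS ⟨T, -, rfl⟩
    rw [Set.mem_singleton_iff] at hS
    have : u ∈ ({x, y} : Set V) := hS ▸ Set.mem_insert _ _
    rcases this with h | h
    · exact hx h.symm
    · exact hy (Set.mem_singleton_iff.mp h).symm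
  calc (2 : ℕ) ^ B.ncard = (2 ^ B.ncard - 1) + 1 := by
        have : (1 : ℕ) ≤ 2 ^ B.ncard := Nat.one_le_two_pow
        omega
    _ = {T : Set V | T ⊆ B ∧ T.Nonempty}.ncard + ({{x, y}} : Set (Set V)).ncard := by
        rw [ncard_nonempty_subsets, Set.ncard_singleton]
    _ = ((fun T => insert u T) '' {T : Set V | T ⊆ B ∧ T.Nonempty}).ncard
          + ({{x, y}} : Set (Set V)).ncard := by rw [Set.ncard_image_of_injOn hinj]
    _ = ((fun T => insert u T) '' {T : Set V | T ⊆ B ∧ T.Nonempty} ∪ {{x, y}}).ncard := by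
        rw [Set.ncard_union_eq hdisj (Set.toFinite _) (Set.toFinite _)]
    _ ≤ Dcount G := Set.ncard_le_ncard hsub (Set.toFinite _)

lemma ncard_B (G : SimpleGraph V) [DecidableRel G.Adj] (u : V) :
    {v : V | v ≠ u ∧ ¬G.Adj u v}.ncard = Fintype.card V - 1 - G.degree u := by
  set B : Set V := {v : V | v ≠ u ∧ ¬G.Adj u v} with hB
  have hcompl : Bᶜ = insert u (G.neighborSet u) := by
    ext v
    simp only [hB, Set.mem_compl_iff, Set.mem_setOf_eq, Set.mem_insert_iff,
      mem_neighborSet, not_and, not_not]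
    constructor
    · intro h
      by_cases hvu : v = u
      · exact Or.inl hvu
      · exact Or.inr (h hvu)
    · rintro (rfl | h)
      · intro h'; exact absurd rfl h'
      · intro _; exact h
  have hc : Bᶜ.ncard = 1 + G.degree u := by
    rw [hcompl, Set.ncard_insert_of_notMem (by simp) (Set.toFinite _)]
    rw [← Nat.card_coe_set_eq, Nat.card_eq_fintype_card, card_neighborSet_eq_degree]
    omega
  have hdle : G.degree u ≤ Fintype.card V - 1 := by
    have := G.degree_lt_card_verts u
    omega
  have := Set.ncard_add_ncard_compl B
  rw [Nat.card_eq_fintype_card] at this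
  omega

lemma Gnd_adj (m x : ℕ) (a b : Option (Fin m)) :
    (Gnd m x).Adj a b ↔ a ≠ b ∧ (match a, b with
      | some _, some _ => True
      | none, some i => i.val < x
      | some i, none => i.val < x
      | none, none => False) := by
  rw [Gnd, fromRel_adj]
  constructor
  · rintro ⟨hne, h | h⟩
    · exact ⟨hne, h⟩
    · refine ⟨hne, ?_⟩
      match a, b with
      | some _, some _ => trivial
      | none, some i => exact h
      | some i, none => exact h
      | none, none => exact h
  · rintro ⟨hne, h⟩
    exact ⟨hne, Or.inl h⟩

lemma Gnd_clique (m x : ℕ) : ∀ a b : Option (Fin m), a ≠ none → b ≠ none → a ≠ b →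
    (Gnd m x).Adj a b := by
  rintro (_ | a) (_ | b) ha hb hab
  · exact absurd rfl ha
  · exact absurd rfl ha
  · exact absurd rfl hb
  · exact (Gnd_adj m x _ _).mpr ⟨hab, trivial⟩

lemma Gnd_B_ncard (m x : ℕ) (hx : x ≤ m) :
    {v : Option (Fin m) | v ≠ none ∧ ¬(Gnd m x).Adj none v}.ncard = m - x := by
  have h1 : {v : Option (Fin m) | v ≠ none ∧ ¬(Gnd m x).Adj none v}
      = some '' {i : Fin m | x ≤ i.val} := by
    ext v
    simp only [Set.mem_setOf_eq, Set.mem_image]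
    constructor
    · rintro ⟨hv, hnadj⟩
      match v with
      | none => exact absurd rfl hv
      | some i =>
        refine ⟨i, ?_, rfl⟩
        by_contra h
        push_neg at h
        exact hnadj ((Gnd_adj m x _ _).mpr ⟨by simp, h⟩)
    · rintro ⟨i, hi, rfl⟩
      refine ⟨by simp, fun hadj => ?_⟩
      have := ((Gnd_adj m x _ _).mp hadj).2
      omega
  rw [h1, Set.ncard_image_of_injective _ (Option.some_injective _)]
  have h2 : {i : Fin m | x ≤ i.val} = Set.range (fun j : Fin (m - x) =>
      (⟨x + j.val, by omega⟩ : Fin m)) := by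
    ext i
    simp only [Set.mem_setOf_eq, Set.mem_range]
    constructor
    · intro h
      exact ⟨⟨i.val - x, by omega⟩, by ext; simp; omega⟩
    · rintro ⟨j, rfl⟩; simp
  rw [h2, ← Nat.card_coe_set_eq, Nat.card_range_of_injective (fun a b hab => by
    have : x + a.val = x + b.val := congrArg Fin.val hab
    exact Fin.ext (by omega : a.val = b.val)), Nat.card_eq_fintype_card, Fintype.card_fin]

lemma iso_Gnd (G : SimpleGraph V) [DecidableRel G.Adj] (u : V) (δ : ℕ)
    (hdeg : G.degree u = δ)
    (hcl : ∀ a b : V, a ≠ u → b ≠ u → a ≠ b → G.Adj a b) :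
    Nonempty (G ≃g Gnd (Fintype.card V - 1) δ) := by
  classical
  set m := Fintype.card V - 1 with hm
  have hcardpos : 1 ≤ Fintype.card V := Fintype.card_pos_iff.mpr ⟨u⟩
  have hsub : Fintype.card {w : V // w ≠ u} = m := by
    rw [hm]
    have : Fintype.card {w : V // ¬(w = u)} = Fintype.card V - Fintype.card {w : V // w = u} :=
      Fintype.card_subtype_compl _
    simpa [Fintype.card_subtype_eq] using this
  set p : {w : V // w ≠ u} → Prop := fun w => G.Adj u ↑w with hp
  have cardA : Fintype.card {w : {w : V // w ≠ u} // p w} = δ := by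
    rw [← hdeg, ← card_neighborSet_eq_degree]
    exact Fintype.card_congr ⟨fun w => ⟨w.1.1, w.2⟩, fun v => ⟨⟨v.1, v.2.ne'⟩, v.2⟩,
      fun w => rfl, fun v => rfl⟩
  have cardB : Fintype.card {w : {w : V // w ≠ u} // ¬p w} = m - δ := by
    rw [Fintype.card_subtype_compl, cardA, hsub]
  have hδm : δ ≤ m := by
    rw [← cardA, ← hsub]
    exact Fintype.card_subtype_le _
  set eA := Fintype.equivFinOfCardEq cardA
  set eB := Fintype.equivFinOfCardEq cardB
  set e1 : {w : V // w ≠ u} ≃ Fin m :=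
    (Equiv.sumCompl p).symm.trans ((eA.sumCongr eB).trans
      (finSumFinEquiv.trans (finCongr (by omega)))) with he1
  have he1val : ∀ w : {w : V // w ≠ u}, G.Adj u ↑w ↔ (e1 w).val < δ := by
    intro w
    by_cases h : p w
    · rw [he1]
      simp only [Equiv.trans_apply, Equiv.sumCompl_symm_apply_of_pos h,
        Equiv.sumCongr_apply, Sum.map_inl, finSumFinEquiv_apply_left, finCongr_apply,
        Fin.coe_cast, Fin.coe_castAdd]
      exact ⟨fun _ => (eA ⟨w, h⟩).isLt, fun _ => h⟩
    · rw [he1]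
      simp only [Equiv.trans_apply, Equiv.sumCompl_symm_apply_of_neg h,
        Equiv.sumCongr_apply, Sum.map_inr, finSumFinEquiv_apply_right, finCongr_apply,
        Fin.coe_cast, Fin.coe_natAdd]
      constructor
      · intro hadj; exact absurd hadj h
      · intro hlt; omega
  set e : V ≃ Option (Fin m) := (Equiv.optionSubtypeNe u).symm.trans (Equiv.optionCongr e1)
    with he
  have heu : e u = none := by
    rw [he]
    simp [Equiv.optionSubtypeNe_symm_self]
  have hew : ∀ (w : V) (hw : w ≠ u), e w = some (e1 ⟨w, hw⟩) := by
    intro w hw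
    rw [he]
    simp [Equiv.optionSubtypeNe_symm_of_ne hw]
  refine ⟨⟨e, ?_⟩⟩
  intro a b
  by_cases ha : a = u <;> by_cases hb : b = u
  · subst ha; subst hb
    simp only [heu]
    constructor
    · intro h; exact absurd rfl ((Gnd_adj _ _ _ _).mp h).1
    · intro h; exact absurd h (G.loopless.irrefl _)
  · subst ha
    rw [heu, hew b hb, Gnd_adj]
    simp only [ne_eq, reduceCtorEq, not_false_eq_true, true_and]
    exact ((he1val ⟨b, hb⟩).symm).trans ⟨fun h => h, fun h => h⟩
  · subst hb
    rw [heu, hew a ha, Gnd_adj]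
    simp only [ne_eq, reduceCtorEq, not_false_eq_true, true_and]
    constructor
    · intro h; exact ((he1val ⟨a, ha⟩).mpr h).symm
    · intro h; exact (he1val ⟨a, ha⟩).mp h.symm
  · rw [hew a ha, hew b hb, Gnd_adj]
    simp only [ne_eq, Option.some.injEq]
    constructor
    · rintro ⟨hne, -⟩
      refine hcl a b ha hb (fun hab => hne ?_)
      subst hab; rfl
    · intro hadj
      refine ⟨fun h => hadj.ne (by
        have := e1.injective (h : e1 ⟨a, ha⟩ = e1 ⟨b, hb⟩)
        exact congrArg Subtype.val this), trivial⟩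

end Aux

/-- Among graphs of order `n` and minimum degree `δ ≤ n - 2`, the graph `G_{n,δ}` is the
unique maximiser of the number of connected induced subgraphs. -/
theorem numConnSub_lt_of_minDegree {V : Type*} [Fintype V] (G : SimpleGraph V)
    [DecidableRel G.Adj] (n δ : ℕ) (hn : Fintype.card V = n) (hδ : G.minDegree = δ)
    (hδn : δ ≤ n - 2) (hiso : IsEmpty (G ≃g Gnd (n - 1) δ)) :
    numConnSub G < numConnSub (Gnd (n - 1) δ) := by
  classical
  by_cases hn1 : n = 0
  · subst hn1
    have hδ0 : δ = 0 := by omega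
    subst hδ0
    have hGzero : numConnSub G = 0 := by
      rw [numConnSub]
      convert Set.ncard_empty (Set V)
      ext S
      simp only [Set.mem_setOf_eq, Set.mem_empty_iff_false, iff_false]
      rintro ⟨⟨v, -⟩, -⟩
      exact (Fintype.card_eq_zero_iff.mp hn).false v
    have hsum := sum_eq (Gnd (0 - 1) 0)
    have hD := Dcount_le (Gnd (0 - 1) 0) none (Gnd_clique _ _)
    rw [Gnd_B_ncard (0 - 1) 0 (by omega)] at hD
    have hcard : Fintype.card (Option (Fin (0 - 1))) = 1 := by simp
    rw [hcard] at hsum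
    rw [hGzero]
    omega
  · haveI : Nonempty V := by rw [← Fintype.card_pos_iff, hn]; omega
    obtain ⟨u, hu⟩ := G.exists_minimal_degree_vertex
    have hdeg : G.degree u = δ := by rw [← hu, hδ]
    by_cases hclq : ∀ a b : V, a ≠ u → b ≠ u → a ≠ b → G.Adj a b
    · exfalso
      obtain ⟨iso⟩ := iso_Gnd G u δ hdeg hclq
      rw [hn] at iso
      exact hiso.false iso
    · push_neg at hclq
      obtain ⟨a, b, ha, hb, hab, hnadj⟩ := hclq
      have hge := Dcount_ge G u a b ha hb hab hnadj
      rw [ncard_B G u, hdeg, hn] at hge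
      have hle := Dcount_le (Gnd (n - 1) δ) none (Gnd_clique _ _)
      rw [Gnd_B_ncard (n - 1) δ (by omega)] at hle
      have h1 := sum_eq G
      have h2 := sum_eq (Gnd (n - 1) δ)
      rw [hn] at h1
      have hcard : Fintype.card (Option (Fin (n - 1))) = n := by
        simp only [Fintype.card_option, Fintype.card_fin]
        omega
      rw [hcard] at h2
      have hpow : 1 ≤ 2 ^ (n - 1 - δ) := Nat.one_le_two_pow
      omega
end

section
/- Let H_{n,α} be the join of K_{n-α} with an independent set of α vertices (every vertex of K_{n-α} adjacent to every one of the α independent vertices). If G has order n and independence number α and G is not isomorphic to H_{n,α}, then N(G) < N(H_{n,α}). -/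
open SimpleGraph

/-- `H_{n,a}` with `n = m + a`: the join of a complete graph on `Fin m` with an independent
set of `a` vertices. -/
def Hgraph (m a : ℕ) : SimpleGraph (Fin m ⊕ Fin a) :=
  SimpleGraph.fromRel (fun x y =>
    match x, y with
    | Sum.inr _, Sum.inr _ => False
    | _, _ => True)

/-- The independence number: the largest size of a set of pairwise nonadjacent vertices. -/
noncomputable def indepNum {V : Type*} [Fintype V] (G : SimpleGraph V) : ℕ :=
  sSup {k | ∃ s : Finset V, s.card = k ∧ ∀ a ∈ s, ∀ b ∈ s, ¬ G.Adj a b}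

lemma connected_of_universal {V : Type*} (G : SimpleGraph V) (S : Set V) (b : V) (hb : b ∈ S)
    (hub : ∀ x ∈ S, x ≠ b → G.Adj x b) : (G.induce S).Connected := by
  rw [connected_iff]
  refine ⟨?_, ⟨⟨b, hb⟩⟩⟩
  have key : ∀ x : S, (G.induce S).Reachable x ⟨b, hb⟩ := by
    intro ⟨x, hx⟩
    rcases eq_or_ne x b with rfl | hne
    · exact Reachable.refl _
    · exact (SimpleGraph.Adj.reachable (by simpa [comap_adj] using hub x hx hne))
  intro x y
  exact (key x).trans (key y).symm

lemma exists_adj_of_connected {V : Type*} (G : SimpleGraph V) (S : Set V)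
    (h : (G.induce S).Connected) {x y : V} (hx : x ∈ S) (hy : y ∈ S) (hne : x ≠ y) :
    ∃ a ∈ S, ∃ b ∈ S, G.Adj a b := by
  obtain ⟨p⟩ := h.preconnected ⟨x, hx⟩ ⟨y, hy⟩
  have hnil : ¬ p.Nil := SimpleGraph.Walk.not_nil_of_ne (by simpa using hne)
  have hadj := SimpleGraph.Walk.adj_snd hnil
  exact ⟨x, hx, (p.getVert 1 : S).1, (p.getVert 1 : S).2, by simpa [comap_adj] using hadj⟩

lemma adj_of_connected_pair {V : Type*} (G : SimpleGraph V) {u v : V} (hne : u ≠ v)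
    (h : (G.induce {u, v}).Connected) : G.Adj u v := by
  obtain ⟨a, ha, b, hb, hab⟩ := exists_adj_of_connected G {u, v} h
    (show u ∈ ({u,v} : Set V) by simp) (show v ∈ ({u,v} : Set V) by simp) hne
  rcases ha with rfl | rfl <;> rcases hb with rfl | rfl
  · exact absurd hab (G.irrefl)
  · exact hab
  · exact hab.symm
  · exact absurd hab (G.irrefl)

lemma singleton_connected {V : Type*} (G : SimpleGraph V) (x : V) :
    (G.induce {x}).Connected :=
  connected_of_universal G {x} x rfl (by simp)

lemma Hgraph_adj_inl {m a : ℕ} (j : Fin m) (w : Fin m ⊕ Fin a) (hw : w ≠ Sum.inl j) :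
    (Hgraph m a).Adj (Sum.inl j) w := by
  rw [Hgraph, fromRel_adj]
  exact ⟨fun h => hw h.symm, Or.inl (by cases w <;> trivial)⟩

lemma Hgraph_not_adj_inr {m a : ℕ} (i i' : Fin a) :
    ¬ (Hgraph m a).Adj (Sum.inr i) (Sum.inr i') := by
  rw [Hgraph, fromRel_adj]
  rintro ⟨-, h | h⟩ <;> exact h

/-- Among graphs of order `n` with independence number `α`, the join `H_{n,α}` is the unique
maximiser of the number of connected induced subgraphs. -/
theorem numConnSub_lt_of_indepNum {V : Type*} [Fintype V] (G : SimpleGraph V)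
    (n α : ℕ) (hn : Fintype.card V = n) (hα : _root_.indepNum G = α)
    (hiso : IsEmpty (G ≃g Hgraph (n - α) α)) :
    numConnSub G < numConnSub (Hgraph (n - α) α) := by
  classical
  -- obtain a maximum independent set
  have hK : _root_.indepNum G ∈ {k | ∃ s : Finset V, s.card = k ∧ ∀ a ∈ s, ∀ b ∈ s, ¬ G.Adj a b} := by
    apply Nat.sSup_mem
    · exact ⟨0, ∅, by simp⟩
    · exact ⟨Fintype.card V, fun k ⟨s, hs, _⟩ => hs ▸ Finset.card_le_univ s⟩
  rw [hα] at hK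
  obtain ⟨s, hcard, hind⟩ := hK
  have hαn : α ≤ n := by rw [← hn, ← hcard]; exact Finset.card_le_univ s
  set A : Set V := ↑s with hAdef
  have hA : Fintype.card ↥A = α := by
    rw [← hcard]; exact Fintype.card_coe s
  have hAc : Fintype.card ↥Aᶜ = n - α := by
    rw [Fintype.card_compl_set, hA, hn]
  let eA : ↥A ≃ Fin α := Fintype.equivFinOfCardEq hA
  let eC : ↥Aᶜ ≃ Fin (n - α) := Fintype.equivFinOfCardEq hAc
  let e : V ≃ (Fin (n - α) ⊕ Fin α) :=
    ((Equiv.Set.sumCompl A).symm.trans (Equiv.sumComm _ _)).trans (Equiv.sumCongr eC eA)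
  have he_mem : ∀ x (hx : x ∈ A), e x = Sum.inr (eA ⟨x, hx⟩) := by
    intro x hx
    simp [e, Equiv.Set.sumCompl_symm_apply_of_mem hx]
  have he_not : ∀ x (hx : x ∉ A), e x = Sum.inl (eC ⟨x, hx⟩) := by
    intro x hx
    simp [e, Equiv.Set.sumCompl_symm_apply_of_notMem hx]
  set 𝒢 : Set (Set V) := {S : Set V | S.Nonempty ∧ (G.induce S).Connected} with h𝒢
  set ℋ : Set (Set (Fin (n - α) ⊕ Fin α)) :=
    {S | S.Nonempty ∧ ((Hgraph (n - α) α).induce S).Connected} with hℋ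
  set F : Set V → Set (Fin (n - α) ⊕ Fin α) := fun S => ⇑e '' S with hF
  have hinj : Function.Injective F := Set.image_injective.mpr e.injective
  -- a good set contained in A is a singleton
  have hsing : ∀ S ∈ 𝒢, S ⊆ A → ∃ x, S = {x} := by
    intro S hS hSA
    obtain ⟨⟨x, hx⟩, hconn⟩ := hS
    refine ⟨x, Set.eq_singleton_iff_unique_mem.mpr ⟨hx, fun y hy => ?_⟩⟩
    by_contra hne
    obtain ⟨a, ha, b, hb, hab⟩ := exists_adj_of_connected G S hconn hy hx hne
    exact hind a (hSA ha) b (hSA hb) hab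
  -- the image of a good set is good
  have himg : F '' 𝒢 ⊆ ℋ := by
    rintro T ⟨S, hS, rfl⟩
    refine ⟨hS.1.image _, ?_⟩
    by_cases hSA : S ⊆ A
    · obtain ⟨x, rfl⟩ := hsing S hS hSA
      have hFx : F {x} = {e x} := by simp [hF]
      rw [hFx]
      exact singleton_connected _ _
    · obtain ⟨u, hu, huA⟩ := Set.not_subset.mp hSA
      refine connected_of_universal _ _ (e u) ⟨u, hu, rfl⟩ ?_
      rintro t ⟨w, hw, rfl⟩ hne
      rw [he_not u huA]
      exact (Hgraph_adj_inl _ _ (by rwa [← he_not u huA])).symm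
  by_cases hEq : F '' 𝒢 = ℋ
  · -- G is isomorphic to H: contradiction
    exfalso
    have key : ∀ u v : V, u ∉ A → u ≠ v → G.Adj u v := by
      intro u v huA hne
      have hT : F {u, v} ∈ ℋ := by
        refine ⟨⟨e u, u, by simp, rfl⟩, ?_⟩
        refine connected_of_universal _ _ (e u) ⟨u, by simp, rfl⟩ ?_
        rintro t ⟨w, hw, rfl⟩ hne'
        rw [he_not u huA]
        exact (Hgraph_adj_inl _ _ (by rwa [← he_not u huA])).symm
      rw [← hEq] at hT
      obtain ⟨S, hS, hFS⟩ := hT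
      have : S = {u, v} := hinj hFS
      subst this
      exact adj_of_connected_pair G hne hS.2
    have hmapG : ∀ u v : V, (Hgraph (n - α) α).Adj (e u) (e v) ↔ G.Adj u v := by
      intro u v
      by_cases hu : u ∈ A <;> by_cases hv : v ∈ A
      · rw [he_mem u hu, he_mem v hv]
        exact iff_of_false (Hgraph_not_adj_inr _ _) (hind u hu v hv)
      · rw [he_mem u hu, he_not v hv]
        have hne : v ≠ u := fun h' => hv (h' ▸ hu)
        constructor
        · intro _
          exact (key v u hv hne).symm
        · intro _
          exact (Hgraph_adj_inl _ _ (by simp)).symm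
      · rw [he_not u hu, he_mem v hv]
        have hne : u ≠ v := fun h' => hu (h' ▸ hv)
        constructor
        · intro _
          exact key u v hu hne
        · intro _
          exact Hgraph_adj_inl _ _ (by simp)
      · constructor
        · intro h
          exact key u v hu (fun h' => h.ne (congrArg e h'))
        · intro h
          rw [he_not u hu]
          exact Hgraph_adj_inl _ _ (by
            rw [← he_not u hu]
            exact fun h' => h.ne.symm (e.injective h'))
    exact hiso.false ⟨e, by intro a b; exact hmapG a b⟩
  · have hss : F '' 𝒢 ⊂ ℋ := HasSubset.Subset.ssubset_of_ne himg hEq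
    have h1 : numConnSub G = (F '' 𝒢).ncard := by
      rw [numConnSub, Set.ncard_image_of_injective _ hinj]
    rw [h1]
    exact Set.ncard_lt_ncard hss (Set.toFinite ℋ)
end

section
/- Let G be a graph of order n with vertex cover number β, and let H_{n,n-β} be the join of K_{β} with an independent set of n-β vertices. If G is not isomorphic to H_{n,n-β}, then N(G) < N(H_{n,n-β}). -/
open SimpleGraph

/-- The vertex cover number: the minimum size of a vertex set meeting every edge. -/
noncomputable def coverNum {V : Type*} [Fintype V] (G : SimpleGraph V) : ℕ :=
  sInf {k | ∃ s : Finset V, s.card = k ∧ ∀ a b, G.Adj a b → a ∈ s ∨ b ∈ s}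

section helpers
variable {V : Type*}

lemma induce_connected_of_hub (G : SimpleGraph V) (S : Set V) (t : V) (ht : t ∈ S)
    (h : ∀ x ∈ S, x ≠ t → G.Adj t x) : (G.induce S).Connected := by
  rw [SimpleGraph.connected_iff]
  have hx : ∀ z : S, (G.induce S).Reachable ⟨t, ht⟩ z := by
    intro z
    by_cases hz : (z : V) = t
    · have hz' : z = ⟨t, ht⟩ := Subtype.ext hz
      rw [hz']
    · exact SimpleGraph.Adj.reachable (by exact h z z.2 hz)
  exact ⟨fun x y => (hx x).symm.trans (hx y), ⟨⟨t, ht⟩⟩⟩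

lemma adj_of_reachable_ne {G : SimpleGraph V} {a b : V} (h : G.Reachable a b) (hne : a ≠ b) :
    ∃ c, G.Adj a c := by
  obtain ⟨w⟩ := h
  cases w with
  | nil => exact absurd rfl hne
  | cons h p => exact ⟨_, h⟩

lemma adj_of_induce_pair_connected {G : SimpleGraph V} {a b : V} (hne : a ≠ b)
    (h : (G.induce {a, b}).Connected) : G.Adj a b := by
  have ha : a ∈ ({a, b} : Set V) := by simp
  have hb : b ∈ ({a, b} : Set V) := by simp
  have hr := h.preconnected ⟨a, ha⟩ ⟨b, hb⟩
  obtain ⟨c, hc⟩ := adj_of_reachable_ne hr (by simp [Subtype.ext_iff, hne])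
  have hc' : G.Adj a (c : V) := hc
  rcases c.2 with h1 | h1
  · exact absurd (h1 ▸ hc') (G.irrefl)
  · exact h1 ▸ hc'

lemma Hgraph_adj (m a : ℕ) (x y : Fin m ⊕ Fin a) :
    (Hgraph m a).Adj x y ↔ x ≠ y ∧ ((∃ i, x = Sum.inl i) ∨ (∃ i, y = Sum.inl i)) := by
  cases x <;> cases y <;> simp [Hgraph]

lemma Hgraph_induce_connected {m a : ℕ} (T : Set (Fin m ⊕ Fin a)) (hT : T.Nonempty)
    (h : T.Subsingleton ∨ ∃ i, Sum.inl i ∈ T) : ((Hgraph m a).induce T).Connected := by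
  rcases h with h | ⟨i, hi⟩
  · obtain ⟨t, ht⟩ := hT
    exact induce_connected_of_hub _ T t ht (fun x hx hxt => absurd (h hx ht) hxt)
  · exact induce_connected_of_hub _ T (Sum.inl i) hi (fun x hx hxt => by
      rw [Hgraph_adj]
      exact ⟨hxt.symm, Or.inl ⟨i, rfl⟩⟩)

end helpers


/-- Among graphs of order `n` with vertex cover number `β`, the join `H_{n,n-β}` of `K_β`
with `n - β` independent vertices is the unique maximiser of the number of connected
induced subgraphs. -/
theorem numConnSub_lt_of_coverNum {V : Type*} [Fintype V] (G : SimpleGraph V)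
    (n β : ℕ) (hn : Fintype.card V = n) (hβ : coverNum G = β)
    (hiso : IsEmpty (G ≃g Hgraph β (n - β))) :
    numConnSub G < numConnSub (Hgraph β (n - β)) := by
  classical
  -- get a minimum cover
  have hmem : β ∈ {k | ∃ s : Finset V, s.card = k ∧ ∀ a b, G.Adj a b → a ∈ s ∨ b ∈ s} := by
    rw [← hβ]
    exact Nat.sInf_mem ⟨Fintype.card V, Finset.univ, by simp⟩
  obtain ⟨C, hCcard, hCcover⟩ := hmem
  have hβn : β ≤ n := by rw [← hCcard, ← hn]; exact Finset.card_le_univ C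
  -- the equivalence
  have h1 : Fintype.card (C : Set V) = β := by simp [hCcard]
  have h2 : Fintype.card ((C : Set V)ᶜ : Set V) = n - β := by
    rw [Fintype.card_compl_set, h1, hn]
  let e : V ≃ (Fin β ⊕ Fin (n - β)) :=
    (Equiv.Set.sumCompl (C : Set V)).symm.trans
      (Equiv.sumCongr (Fintype.equivFinOfCardEq h1) (Fintype.equivFinOfCardEq h2))
  have he_mem : ∀ x : V, x ∈ C → ∃ i, e x = Sum.inl i := by
    intro x hx
    refine ⟨Fintype.equivFinOfCardEq h1 ⟨x, hx⟩, ?_⟩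
    simp only [e, Equiv.trans_apply]
    rw [Equiv.Set.sumCompl_symm_apply_of_mem (s := (C : Set V)) hx]
    rfl
  have he_not_mem : ∀ x : V, x ∉ C → ∃ i, e x = Sum.inr i := by
    intro x hx
    refine ⟨Fintype.equivFinOfCardEq h2 ⟨x, hx⟩, ?_⟩
    simp only [e, Equiv.trans_apply]
    rw [Equiv.Set.sumCompl_symm_apply_of_notMem (s := (C : Set V)) hx]
    rfl
  have he_inl_iff : ∀ x : V, (∃ i, e x = Sum.inl i) ↔ x ∈ C := by
    intro x
    constructor
    · intro ⟨i, hi⟩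
      by_contra hx
      obtain ⟨j, hj⟩ := he_not_mem x hx
      rw [hi] at hj; cases hj
    · exact he_mem x
  -- non-iso gives a non-edge at the cover
  have hexists : ∃ c ∈ C, ∃ v, v ≠ c ∧ ¬ G.Adj c v := by
    by_contra hcon
    push_neg at hcon
    have hadj_iff : ∀ a b : V, G.Adj a b ↔ a ≠ b ∧ (a ∈ C ∨ b ∈ C) := by
      intro a b
      constructor
      · intro h; exact ⟨h.ne, hCcover a b h⟩
      · rintro ⟨hne, hc | hc⟩
        · exact hcon a hc b hne.symm
        · exact (hcon b hc a hne).symm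
    refine hiso.false ?_
    refine ⟨e, ?_⟩
    intro a b
    rw [Hgraph_adj, hadj_iff]
    constructor
    · rintro ⟨hne, h⟩
      refine ⟨fun hab => hne (hab ▸ rfl), ?_⟩
      rcases h with ⟨i, hi⟩ | ⟨i, hi⟩
      · exact Or.inl ((he_inl_iff a).mp ⟨i, hi⟩)
      · exact Or.inr ((he_inl_iff b).mp ⟨i, hi⟩)
    · rintro ⟨hne, h⟩
      refine ⟨fun hab => hne (e.injective hab), ?_⟩
      rcases h with hc | hc
      · exact Or.inl (he_mem a hc)
      · exact Or.inr (he_mem b hc)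
  obtain ⟨c, hcC, v, hvc, hnadj⟩ := hexists
  -- sets
  set A := {S : Set V | S.Nonempty ∧ (G.induce S).Connected} with hA
  set B := {S : Set (Fin β ⊕ Fin (n - β)) | S.Nonempty ∧ ((Hgraph β (n - β)).induce S).Connected}
    with hB
  have hmapsto : ∀ S ∈ A, (e '' S) ∈ B := by
    rintro S ⟨hSne, hScon⟩
    refine ⟨hSne.image e, ?_⟩
    apply Hgraph_induce_connected _ (hSne.image e)
    by_cases hsub : S.Subsingleton
    · exact Or.inl (hsub.image e)
    · right
      rw [Set.not_subsingleton_iff] at hsub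
      obtain ⟨x, hx, y, hy, hxy⟩ := hsub
      have hr := hScon.preconnected ⟨x, hx⟩ ⟨y, hy⟩
      obtain ⟨z, hz⟩ := adj_of_reachable_ne hr (by simp [Subtype.ext_iff, hxy])
      have hz' : G.Adj x (z : V) := hz
      have : x ∈ C ∨ (z : V) ∈ C := hCcover _ _ hz'
      rcases this with hc | hc
      · obtain ⟨i, hi⟩ := he_mem x hc
        exact ⟨i, ⟨x, hx, hi⟩⟩
      · obtain ⟨i, hi⟩ := he_mem _ hc
        exact ⟨i, ⟨(z : V), z.2, hi⟩⟩
  -- the extra set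
  have hT0 : (e '' {c, v}) ∈ B := by
    have hne : (e '' {c, v}).Nonempty := ⟨e c, c, by simp, rfl⟩
    refine ⟨hne, ?_⟩
    apply Hgraph_induce_connected _ hne
    right
    obtain ⟨i, hi⟩ := he_mem c hcC
    exact ⟨i, ⟨c, by simp, hi⟩⟩
  have hT0_not : (e '' {c, v}) ∉ (Set.image e '' A) := by
    rintro ⟨S, hSA, hSeq⟩
    have hS : S = {c, v} := Set.image_injective.mpr e.injective hSeq
    subst hS
    exact hnadj (adj_of_induce_pair_connected (Ne.symm hvc) hSA.2)
  have hss : (Set.image e '' A) ⊂ B := by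
    constructor
    · rintro T ⟨S, hS, rfl⟩; exact hmapsto S hS
    · intro hsub
      exact hT0_not (hsub hT0)
  have hcard : A.ncard = (Set.image e '' A).ncard :=
    (Set.ncard_image_of_injective A (Set.image_injective.mpr e.injective)).symm
  calc numConnSub G = (Set.image e '' A).ncard := hcard
    _ < B.ncard := Set.ncard_lt_ncard hss (Set.toFinite B)
    _ = numConnSub (Hgraph β (n - β)) := rfl
end

section
/- Let G be a complete l-partite graph of order n with partite sets A and B among its parts satisfying |B| < |A| - 1, and fix a ∈ A. Let G' be the complete l-partite graph obtained by moving one vertex from A to B (parts of sizes |A|-1 and |B|+1, others unchanged). Then N(G') - N(G) = 2^{|A|-1} - 2^{|B|} > 0. -/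
open SimpleGraph

/-- The complete multipartite graph with parts indexed by `ι`, the part `i` having
vertex set `Fin (s i)`. -/
def completeMultipartite {ι : Type*} (s : ι → ℕ) : SimpleGraph (Σ i, Fin (s i)) :=
  { Adj := fun x y => x.1 ≠ y.1
    symm := ⟨fun _ _ h => Ne.symm h⟩
    loopless := ⟨fun _ h => h rfl⟩ }

lemma ncard_setOf_eq_filter {V : Type*} [Fintype V] [DecidableEq V] (p : Set V → Prop)
    [DecidablePred fun t : Finset V => p ↑t] :
    Set.ncard {S : Set V | p S} =
      (Finset.univ.filter fun t : Finset V => p ↑t).card := by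
  classical
  have e : {t : Finset V // p ↑t} ≃ {S : Set V // p S} :=
    Fintype.finsetEquivSet.subtypeEquiv (fun t => by simp)
  rw [← Nat.card_coe_set_eq, ← Fintype.card_subtype]
  exact (Nat.card_congr e).symm.trans (Nat.card_eq_fintype_card)

lemma conn_iff {ι : Type*} (s : ι → ℕ) (S : Set (Σ i, Fin (s i))) :
    ((completeMultipartite s).induce S).Connected ↔
      (∃ a, S = {a}) ∨ ∃ x ∈ S, ∃ y ∈ S, x.1 ≠ y.1 := by
  constructor
  · intro h
    by_cases hs : ∃ x ∈ S, ∃ y ∈ S, x.1 ≠ y.1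
    · exact Or.inr hs
    · push_neg at hs
      left
      obtain ⟨⟨a, ha⟩⟩ := h.nonempty
      refine ⟨a, Set.eq_singleton_iff_nonempty_unique_mem.mpr ⟨⟨a, ha⟩, ?_⟩⟩
      intro x hx
      obtain ⟨w⟩ := h.preconnected ⟨x, hx⟩ ⟨a, ha⟩
      cases w with
      | nil => rfl
      | @cons _ b _ h' p => exact ((id h' : (x : Σ i, Fin (s i)).1 ≠ (b : Σ i, Fin (s i)).1) (hs _ hx _ b.2)).elim
  · rintro (⟨a, rfl⟩ | ⟨x, hx, y, hy, hxy⟩)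
    · refine (connected_iff _).mpr ⟨fun u v => ?_, ⟨⟨a, Set.mem_singleton a⟩⟩⟩
      have : u = v := Subtype.ext (u.2.trans v.2.symm)
      exact this ▸ Reachable.refl u
    · refine (connected_iff _).mpr ⟨fun u v => ?_, ⟨⟨x, hx⟩⟩⟩
      by_cases huv : (u : Σ i, Fin (s i)).1 = (v : Σ i, Fin (s i)).1
      · obtain ⟨z, hz, hzu⟩ : ∃ z ∈ S, z.1 ≠ (u : Σ i, Fin (s i)).1 := by
          by_cases hxu : x.1 = (u : Σ i, Fin (s i)).1
          · exact ⟨y, hy, fun h => hxy (hxu.trans h.symm)⟩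
          · exact ⟨x, hx, hxu⟩
        have h1 : ((completeMultipartite s).induce S).Adj u ⟨z, hz⟩ := show (u : Σ i, Fin (s i)).1 ≠ z.1 from fun h => hzu h.symm
        have h2 : ((completeMultipartite s).induce S).Adj ⟨z, hz⟩ v := show z.1 ≠ (v : Σ i, Fin (s i)).1 from fun h =>
          hzu (h.trans huv.symm)
        exact (h1.reachable).trans h2.reachable
      · exact Adj.reachable (show ((completeMultipartite s).induce S).Adj u v from huv)

section KeyCount
variable {ι : Type*} [Fintype ι] [DecidableEq ι] (s : ι → ℕ)

/-- The `i`-th part, as a finset of the vertex type. -/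
def cmPart (i : ι) : Finset (Σ i, Fin (s i)) := Finset.univ.filter (fun x => x.1 = i)

lemma mem_cmPart {x : Σ i, Fin (s i)} {i : ι} : x ∈ cmPart s i ↔ x.1 = i := by
  simp [cmPart]

lemma card_cmPart (i : ι) : (cmPart s i).card = s i := by
  have : cmPart s i = Finset.univ.map ⟨Sigma.mk i, sigma_mk_injective⟩ := by
    ext x
    simp only [cmPart, Finset.mem_filter, Finset.mem_univ, true_and, Finset.mem_map,
      Function.Embedding.coeFn_mk]
    constructor
    · intro h
      cases x with
      | mk j a => subst h; exact ⟨a, rfl⟩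
    · rintro ⟨a, rfl⟩; rfl
  rw [this, Finset.card_map, Finset.card_univ, Fintype.card_fin]

/-- The key counting formula for complete multipartite graphs. -/
lemma numConnSub_completeMultipartite_key :
    numConnSub (completeMultipartite s) + (∑ i, 2 ^ s i) + 1 =
    (∑ i, s i) + 2 ^ (∑ i, s i) + Fintype.card ι := by
  classical
  have hcardV : Fintype.card (Σ i, Fin (s i)) = ∑ i, s i := by
    simp [Fintype.card_sigma]
  have h0 : numConnSub (completeMultipartite s) =
      (Finset.univ.filter fun t : Finset (Σ i, Fin (s i)) =>
        (∃ a, t = {a}) ∨ ∃ x ∈ t, ∃ y ∈ t, x.1 ≠ y.1).card := by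
    rw [numConnSub]
    have h1 : {S : Set (Σ i, Fin (s i)) | S.Nonempty ∧
          ((completeMultipartite s).induce S).Connected}
        = {S : Set (Σ i, Fin (s i)) | (∃ a, S = {a}) ∨ ∃ x ∈ S, ∃ y ∈ S, x.1 ≠ y.1} := by
      ext S
      simp only [Set.mem_setOf_eq, conn_iff]
      constructor
      · rintro ⟨-, h⟩; exact h
      · intro h
        refine ⟨?_, h⟩
        rcases h with ⟨a, rfl⟩ | ⟨x, hx, -⟩
        · exact ⟨a, rfl⟩
        · exact ⟨x, hx⟩
    rw [h1, ncard_setOf_eq_filter]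
    congr 1
    apply Finset.filter_congr
    intro t _
    simp [Finset.coe_eq_singleton]
  rw [h0]
  rw [Finset.filter_or, Finset.card_union_of_disjoint (by
    rw [Finset.disjoint_left]
    rintro t ht1 ht2
    simp only [Finset.mem_filter] at ht1 ht2
    obtain ⟨-, a, rfl⟩ := ht1
    obtain ⟨-, x, hx, y, hy, hxy⟩ := ht2
    rw [Finset.mem_singleton] at hx hy
    exact hxy (by rw [hx, hy]))]
  have hsingles : (Finset.univ.filter fun t : Finset (Σ i, Fin (s i)) =>
      ∃ a, t = {a}).card = ∑ i, s i := by
    have : (Finset.univ.filter fun t : Finset (Σ i, Fin (s i)) => ∃ a, t = {a})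
        = Finset.univ.image (fun a : Σ i, Fin (s i) => ({a} : Finset (Σ i, Fin (s i)))) := by
      ext t
      simp [eq_comm]
    rw [this, Finset.card_image_of_injective _ Finset.singleton_injective,
      Finset.card_univ, hcardV]
  have hNE : (Finset.univ.filter fun t : Finset (Σ i, Fin (s i)) => t.Nonempty).card + 1
      = 2 ^ (∑ i, s i) := by
    have h2 : (Finset.univ.filter fun t : Finset (Σ i, Fin (s i)) => t.Nonempty)
        = Finset.univ.erase ∅ := by
      ext t
      simp [Finset.nonempty_iff_ne_empty]
    rw [h2, Finset.card_erase_of_mem (Finset.mem_univ _), Finset.card_univ,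
      Fintype.card_finset, hcardV]
    have := Nat.one_le_two_pow (n := ∑ i, s i)
    omega
  have hmono : (Finset.univ.filter fun t : Finset (Σ i, Fin (s i)) =>
      t.Nonempty ∧ ∀ x ∈ t, ∀ y ∈ t, x.1 = y.1).card + Fintype.card ι
      = ∑ i, 2 ^ s i := by
    have h3 : (Finset.univ.filter fun t : Finset (Σ i, Fin (s i)) =>
        t.Nonempty ∧ ∀ x ∈ t, ∀ y ∈ t, x.1 = y.1)
        = Finset.univ.biUnion (fun i => ((cmPart s i).powerset.erase ∅)) := by
      ext t
      simp only [Finset.mem_filter, Finset.mem_univ, true_and, Finset.mem_biUnion,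
        Finset.mem_erase, Finset.mem_powerset]
      constructor
      · rintro ⟨⟨x, hx⟩, hm⟩
        refine ⟨x.1, Finset.nonempty_iff_ne_empty.mp ⟨x, hx⟩, fun y hy => ?_⟩
        rw [mem_cmPart]
        exact hm y hy x hx
      · rintro ⟨i, hne, hsub⟩
        obtain ⟨x, hx⟩ := Finset.nonempty_iff_ne_empty.mpr hne
        refine ⟨⟨x, hx⟩, fun a ha b hb => ?_⟩
        have h1 := (mem_cmPart s).mp (hsub ha)
        have h2 := (mem_cmPart s).mp (hsub hb)
        rw [h1, h2]
    rw [h3, Finset.card_biUnion (fun i _ j _ hij => by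
      simp only [Function.onFun]
      rw [Finset.disjoint_left]
      rintro t ht1 ht2
      rw [Finset.mem_erase, Finset.mem_powerset] at ht1 ht2
      obtain ⟨x, hx⟩ := Finset.nonempty_iff_ne_empty.mpr ht1.1
      exact hij (((mem_cmPart s).mp (ht1.2 hx)).symm.trans ((mem_cmPart s).mp (ht2.2 hx))))]
    have h4 : ∀ i : ι, ((cmPart s i).powerset.erase ∅).card + 1 = 2 ^ s i := by
      intro i
      rw [Finset.card_erase_of_mem (Finset.empty_mem_powerset _), Finset.card_powerset,
        card_cmPart]
      have := Nat.one_le_two_pow (n := s i)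
      omega
    calc (∑ i, ((cmPart s i).powerset.erase ∅).card) + Fintype.card ι
        = ∑ i, (((cmPart s i).powerset.erase ∅).card + 1) := by
          rw [Finset.sum_add_distrib, Finset.sum_const, smul_eq_mul, mul_one,
            Finset.card_univ]
      _ = ∑ i, 2 ^ s i := Finset.sum_congr rfl (fun i _ => h4 i)
  have hsplit : (Finset.univ.filter fun t : Finset (Σ i, Fin (s i)) =>
        ∃ x ∈ t, ∃ y ∈ t, x.1 ≠ y.1).card
      + (Finset.univ.filter fun t : Finset (Σ i, Fin (s i)) =>
          t.Nonempty ∧ ∀ x ∈ t, ∀ y ∈ t, x.1 = y.1).card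
      = (Finset.univ.filter fun t : Finset (Σ i, Fin (s i)) => t.Nonempty).card := by
    have e1 : (Finset.univ.filter fun t : Finset (Σ i, Fin (s i)) =>
          ∃ x ∈ t, ∃ y ∈ t, x.1 ≠ y.1)
        = (Finset.univ.filter fun t : Finset (Σ i, Fin (s i)) => t.Nonempty).filter
            (fun t => ∃ x ∈ t, ∃ y ∈ t, x.1 ≠ y.1) := by
      rw [Finset.filter_filter]
      ext t
      simp only [Finset.mem_filter, Finset.mem_univ, true_and]
      constructor
      · intro h
        exact ⟨(by obtain ⟨x, hx, -⟩ := h; exact ⟨x, hx⟩), h⟩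
      · rintro ⟨-, h⟩; exact h
    have e2 : (Finset.univ.filter fun t : Finset (Σ i, Fin (s i)) =>
          t.Nonempty ∧ ∀ x ∈ t, ∀ y ∈ t, x.1 = y.1)
        = (Finset.univ.filter fun t : Finset (Σ i, Fin (s i)) => t.Nonempty).filter
            (fun t => ¬ ∃ x ∈ t, ∃ y ∈ t, x.1 ≠ y.1) := by
      rw [Finset.filter_filter]
      ext t
      simp only [Finset.mem_filter, Finset.mem_univ, true_and]
      constructor
      · rintro ⟨h1, h2⟩
        exact ⟨h1, by push_neg; exact h2⟩
      · rintro ⟨h1, h2⟩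
        push_neg at h2
        exact ⟨h1, h2⟩
    rw [e1, e2]
    exact Finset.card_filter_add_card_filter_not _
  omega
end KeyCount

/-- Moving a vertex from a largest part `A` to a part `B` with `|B| < |A| - 1` of a complete
multipartite graph strictly increases the number of connected induced subgraphs, the increase
being exactly `2^(|A|-1) - 2^(|B|)`. -/
theorem numConnSub_completeMultipartite_shift {ι : Type*} [Fintype ι] [DecidableEq ι]
    (s : ι → ℕ) (iA iB : ι) (hne : iA ≠ iB) (hB : s iB < s iA - 1) :
    numConnSub (completeMultipartite
          (Function.update (Function.update s iA (s iA - 1)) iB (s iB + 1))) +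
        2 ^ (s iB) =
      numConnSub (completeMultipartite s) + 2 ^ (s iA - 1) ∧
    numConnSub (completeMultipartite s) <
      numConnSub (completeMultipartite
        (Function.update (Function.update s iA (s iA - 1)) iB (s iB + 1))) := by
  classical
  set s' := Function.update (Function.update s iA (s iA - 1)) iB (s iB + 1) with hs'
  have hA2 : 2 ≤ s iA := by omega
  have hs'A : s' iA = s iA - 1 := by
    rw [hs', Function.update_of_ne hne, Function.update_self]
  have hs'B : s' iB = s iB + 1 := by
    rw [hs', Function.update_self]
  have hs'other : ∀ i, i ≠ iA → i ≠ iB → s' i = s i := by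
    intro i h1 h2
    rw [hs', Function.update_of_ne h2, Function.update_of_ne h1]
  -- decomposition of sums over ι
  have decomp : ∀ g : ι → ℕ,
      (∑ i ∈ (Finset.univ.erase iB).erase iA, g i) + g iA + g iB = ∑ i, g i := by
    intro g
    rw [Finset.sum_erase_add _ _ (Finset.mem_erase.mpr ⟨hne, Finset.mem_univ iA⟩),
      Finset.sum_erase_add _ _ (Finset.mem_univ iB)]
  have hsum : ∀ f : ℕ → ℕ,
      (∑ i, f (s' i)) + f (s iA) + f (s iB)
        = (∑ i, f (s i)) + f (s iA - 1) + f (s iB + 1) := by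
    intro f
    have e : ∀ i ∈ (Finset.univ.erase iB).erase iA, f (s' i) = f (s i) := by
      intro i hi
      rw [Finset.mem_erase, Finset.mem_erase] at hi
      rw [hs'other i hi.1 hi.2.1]
    rw [← decomp (fun i => f (s' i)), ← decomp (fun i => f (s i)),
      Finset.sum_congr rfl e, hs'A, hs'B]
    ring
  have hn : (∑ i, s' i) = ∑ i, s i := by
    have := hsum id
    simp only [id_eq] at this
    set u := ∑ i, s' i
    set v := ∑ i, s i
    omega
  have hpow := hsum (fun m => 2 ^ m)
  beta_reduce at hpow
  have k1 := numConnSub_completeMultipartite_key s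
  have k2 := numConnSub_completeMultipartite_key s'
  rw [hn] at k2
  have hAB : 2 ^ (s iB) < 2 ^ (s iA - 1) := Nat.pow_lt_pow_right one_lt_two hB
  have hA1 : s iA - 1 + 1 = s iA := by omega
  have hpowA : 2 ^ (s iA) = 2 ^ (s iA - 1) * 2 := by
    have := pow_succ 2 (s iA - 1)
    rw [hA1] at this
    exact this
  have hpowB : 2 ^ (s iB + 1) = 2 ^ (s iB) * 2 := by
    rw [pow_succ]
  set N := numConnSub (completeMultipartite s)
  set N' := numConnSub (completeMultipartite s')
  set P := ∑ i, 2 ^ s i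
  set P' := ∑ i, 2 ^ s' i
  set T := 2 ^ (∑ i, s i)
  set c := Fintype.card ι
  set pA := 2 ^ (s iA)
  set pA1 := 2 ^ (s iA - 1)
  set pB := 2 ^ (s iB)
  set pB1 := 2 ^ (s iB + 1)
  set n := ∑ i, s i
  constructor
  · omega
  · omega
end

section
/- In a complete multipartite graph G of order n, for a vertex a lying in a partite set A, the number of connected induced subgraphs of G containing a equals 1 + (2^{n - |A|} - 1) · 2^{|A| - 1}. -/
open SimpleGraph

/-- Counting subsets of `P` containing a fixed element `a ∈ P`. -/
lemma count_subsets_aux {V : Type*} [Fintype V] (P : Set V) (a : V) (ha : a ∈ P) :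
    {S : Set V | a ∈ S ∧ S ⊆ P}.ncard = 2 ^ (P.ncard - 1) := by
  classical
  have e : {S : Set V | a ∈ S ∧ S ⊆ P} ≃ Set ↥(P \ {a}) := {
    toFun := fun S => {x | ↑x ∈ S.1}
    invFun := fun T => ⟨insert a (Subtype.val '' T), by
      constructor
      · exact Set.mem_insert _ _
      · rintro x (rfl | ⟨y, hy, rfl⟩)
        · exact ha
        · exact y.2.1⟩
    left_inv := by
      rintro ⟨S, haS, hSP⟩
      ext x
      simp only [Set.mem_insert_iff, Set.mem_image, Set.mem_setOf_eq]
      constructor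
      · rintro (rfl | ⟨⟨y, hy⟩, h1, rfl⟩)
        · exact haS
        · exact h1
      · intro hx
        by_cases hxa : x = a
        · exact Or.inl hxa
        · exact Or.inr ⟨⟨x, hSP hx, hxa⟩, hx, rfl⟩
    right_inv := by
      intro T
      ext ⟨x, hxP, hxa⟩
      simp only [Set.mem_setOf_eq, Set.mem_insert_iff, Set.mem_image]
      constructor
      · rintro (h | ⟨y, hy, h⟩)
        · exact absurd h hxa
        · obtain rfl : y = ⟨x, hxP, hxa⟩ := Subtype.ext h
          exact hy
      · intro h; exact Or.inr ⟨_, h, rfl⟩ }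
  have hfin : Fintype ↥(P \ {a}) := Fintype.ofFinite _
  rw [← Nat.card_coe_set_eq, Nat.card_congr e]
  rw [Nat.card_eq_fintype_card, Fintype.card_set, ← Nat.card_eq_fintype_card,
    Nat.card_coe_set_eq, Set.ncard_diff_singleton_of_mem ha]

/-- Characterization of connected induced subgraphs of a complete multipartite graph
containing a fixed vertex. -/
lemma conn_iff_aux {V ι : Type*} [DecidableEq ι]
    (f : V → ι) (G : SimpleGraph V) (hG : ∀ x y, G.Adj x y ↔ f x ≠ f y)
    (a : V) (S : Set V) (ha : a ∈ S) :
    (G.induce S).Connected ↔ (S = {a} ∨ ∃ b ∈ S, f b ≠ f a) := by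
  have adj_iff : ∀ u v : S, (G.induce S).Adj u v ↔ f ↑u ≠ f ↑v := by
    intro u v; simp [hG]
  constructor
  · intro hc
    by_contra h
    push_neg at h
    obtain ⟨hS, hall⟩ := h
    have hex : ∃ x ∈ S, x ≠ a := by
      by_contra hx
      push_neg at hx
      exact hS (Set.eq_singleton_iff_unique_mem.mpr ⟨ha, hx⟩)
    obtain ⟨x, hx, hxa⟩ := hex
    have : (⟨x, hx⟩ : S) = ⟨a, ha⟩ := by
      obtain ⟨w⟩ := hc.preconnected ⟨x, hx⟩ ⟨a, ha⟩
      cases w with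
      | nil => rfl
      | @cons _ y _ h' _ =>
        exact absurd ((hall _ hx).trans (hall _ y.2).symm) ((adj_iff _ _).mp h')
    exact hxa (congrArg Subtype.val this)
  · rintro (rfl | ⟨b, hb, hba⟩)
    · rw [connected_iff]
      refine ⟨fun u v => ?_, ⟨⟨a, rfl⟩⟩⟩
      have : u = v := Subtype.ext (u.2.trans v.2.symm)
      exact this ▸ Reachable.refl u
    · have key : ∀ x : S, (G.induce S).Reachable x ⟨a, ha⟩ := by
        rintro ⟨x, hx⟩
        by_cases hxa : f x = f a
        · by_cases hx' : x = a
          · subst hx'; exact Reachable.refl _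
          · have h1 : (G.induce S).Adj ⟨x, hx⟩ ⟨b, hb⟩ :=
              (adj_iff _ _).mpr (fun hc => hba (hc ▸ hxa))
            have h2 : (G.induce S).Adj ⟨b, hb⟩ ⟨a, ha⟩ := (adj_iff _ _).mpr hba
            exact (h1.reachable).trans h2.reachable
        · exact Adj.reachable ((adj_iff _ _).mpr hxa)
      rw [connected_iff]
      exact ⟨fun u v => (key u).trans (key v).symm, ⟨⟨a, ha⟩⟩⟩

/-- In a complete multipartite graph `G` (with parts given by the fibres of `f`), the number
of connected induced subgraphs containing a vertex `a` whose part is `A` equals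
`1 + (2^(n - |A|) - 1) * 2^(|A| - 1)`. -/
theorem numConnSubAt_completeMultipartite {V ι : Type*} [Fintype V] [DecidableEq ι]
    (f : V → ι) (G : SimpleGraph V) (hG : ∀ x y, G.Adj x y ↔ f x ≠ f y) (a : V) :
    numConnSubAt G a =
      1 + (2 ^ (Fintype.card V - {x | f x = f a}.ncard) - 1) *
        2 ^ ({x | f x = f a}.ncard - 1) := by
  classical
  set P : Set V := {x | f x = f a} with hP
  have haP : a ∈ P := rfl
  set n := Fintype.card V
  have huniv : (Set.univ : Set V).ncard = n := by
    rw [Set.ncard_univ, Nat.card_eq_fintype_card]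
  -- the set we are counting
  have hset : {S : Set V | a ∈ S ∧ (G.induce S).Connected}
      = insert ({a} : Set V)
        ({S : Set V | a ∈ S ∧ S ⊆ Set.univ} \ {S : Set V | a ∈ S ∧ S ⊆ P}) := by
    ext S
    simp only [Set.mem_setOf_eq, Set.mem_insert_iff, Set.mem_diff, Set.subset_univ,
      and_true, true_and]
    constructor
    · rintro ⟨haS, hc⟩
      rcases (conn_iff_aux f G hG a S haS).mp hc with h | ⟨b, hb, hba⟩
      · exact Or.inl h
      · exact Or.inr ⟨haS, fun h' => hba (h'.2 hb)⟩
    · rintro (rfl | ⟨haS, hnot⟩)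
      · exact ⟨rfl, (conn_iff_aux f G hG a {a} (Set.mem_singleton a)).mpr (Or.inl rfl)⟩
      · refine ⟨haS, (conn_iff_aux f G hG a S haS).mpr (Or.inr ?_)⟩
        by_contra hb
        push_neg at hb
        exact hnot ⟨haS, fun x hx => hb x hx⟩
  have hsub : {S : Set V | a ∈ S ∧ S ⊆ P} ⊆ {S : Set V | a ∈ S ∧ S ⊆ Set.univ} :=
    fun S hS => ⟨hS.1, Set.subset_univ _⟩
  have hamem : ({a} : Set V) ∈ {S : Set V | a ∈ S ∧ S ⊆ P} :=
    ⟨rfl, by rintro x rfl; exact haP⟩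
  have hnotmem : ({a} : Set V) ∉
      ({S : Set V | a ∈ S ∧ S ⊆ Set.univ} \ {S : Set V | a ∈ S ∧ S ⊆ P}) :=
    fun h => h.2 hamem
  have hp1 : 1 ≤ P.ncard := (Set.ncard_pos (Set.toFinite P)).mpr ⟨a, haP⟩
  have hpn : P.ncard ≤ n := by
    rw [← huniv]; exact Set.ncard_le_ncard (Set.subset_univ _) (Set.toFinite _)
  rw [numConnSubAt, hset, Set.ncard_insert_of_notMem hnotmem (Set.toFinite _),
    Set.ncard_diff hsub (Set.toFinite _), count_subsets_aux _ a (Set.mem_univ a),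
    count_subsets_aux _ a haP, huniv]
  have harith : (2 ^ (n - P.ncard) - 1) * 2 ^ (P.ncard - 1)
      = 2 ^ (n - 1) - 2 ^ (P.ncard - 1) := by
    rw [Nat.sub_mul, one_mul, ← pow_add]
    have h' : n - P.ncard + (P.ncard - 1) = n - 1 := by omega
    rw [h']
  rw [harith]
  omega
end

section
/- Let G be a graph of order n with chromatic number l, and let T_{n,l} be the Turán graph (the complete l-partite graph of order n whose part sizes differ by at most one). If G is not isomorphic to T_{n,l}, then N(G) < N(T_{n,l}). -/
open SimpleGraph

namespace NCSAux

open Finset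


lemma aux_arith {l n i q : ℕ} (hl : 0 < l) (hi : i < l) :
    q * l + i < n ↔ q < (n + (l - 1 - i)) / l := by
  simp only [Nat.lt_iff_add_one_le, Nat.le_div_iff_mul_le hl, add_mul, one_mul]
  omega

lemma bal_div (l n : ℕ) (hl : 0 < l) {i j : ℕ} (hi : i < l) (hj : j < l) :
    (n + (l - 1 - i)) / l ≤ (n + (l - 1 - j)) / l + 1 := by
  have h1 : (n + (l - 1 - j) + l) / l = (n + (l - 1 - j)) / l + 1 := Nat.add_div_right _ hl
  calc (n + (l - 1 - i)) / l ≤ (n + (l - 1 - j) + l) / l := Nat.div_le_div_right (by omega)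
    _ = _ := h1

/-- characterisation of balanced sequences -/
lemma balanced_char {l n : ℕ} (hl : 0 < l) (f : Fin l → ℕ)
    (hsum : ∑ i, f i = n) (hbal : ∀ i j, f i ≤ f j + 1) :
    (∀ i, f i = n / l ∨ f i = n / l + 1) ∧
      (univ.filter fun i => f i = n / l + 1).card = n % l := by
  classical
  obtain ⟨i0, -, hmin⟩ := Finset.exists_min_image univ f ⟨⟨0, hl⟩, mem_univ _⟩
  set μ := f i0 with hμ
  have hrange : ∀ i, f i = μ ∨ f i = μ + 1 := by
    intro i
    have h1 := hmin i (mem_univ i)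
    have h2 := hbal i i0
    omega
  set k := (univ.filter fun i => f i = μ + 1).card with hk
  have hkl : k < l := by
    have hne : (univ.filter fun i => f i = μ + 1) ≠ univ := by
      intro h
      have : i0 ∈ univ.filter fun i => f i = μ + 1 := by rw [h]; exact mem_univ i0
      simp only [mem_filter] at this
      omega
    have := Finset.card_lt_card (Finset.ssubset_univ_iff.mpr hne)
    simpa using this
  have hsum2 : n = l * μ + k := by
    have : ∑ i, f i = ∑ i : Fin l, (μ + if f i = μ + 1 then 1 else 0) := by
      apply Finset.sum_congr rfl
      intro i _
      rcases hrange i with h | h <;> simp [h]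
    rw [this, Finset.sum_add_distrib, Finset.sum_const, Finset.sum_boole] at hsum
    simp at hsum
    omega
  have hdm : n / l = μ ∧ n % l = k := by
    constructor
    · rw [hsum2, Nat.mul_add_div hl, Nat.div_eq_of_lt hkl]; omega
    · rw [hsum2]; rw [Nat.mul_add_mod]; exact Nat.mod_eq_of_lt hkl
  refine ⟨fun i => ?_, ?_⟩
  · rw [hdm.1]; exact hrange i
  · rw [hdm.1, hdm.2, hk]


lemma sum_pow_of_char {l m k : ℕ} (f : Fin l → ℕ)
    (h1 : ∀ i, f i = m ∨ f i = m + 1)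
    (h2 : (univ.filter fun i => f i = m + 1).card = k) :
    ∑ i, 2 ^ f i = k * 2 ^ (m + 1) + (l - k) * 2 ^ m := by
  classical
  rw [← Finset.sum_filter_add_sum_filter_not univ (fun i => f i = m + 1)]
  have e1 : ∑ i ∈ univ.filter (fun i => f i = m + 1), 2 ^ f i = k * 2 ^ (m + 1) := by
    rw [Finset.sum_congr rfl (fun i hi => by rw [(mem_filter.mp hi).2]),
      Finset.sum_const, h2, smul_eq_mul]
  have e2 : ∑ i ∈ univ.filter (fun i => ¬ f i = m + 1), 2 ^ f i = (l - k) * 2 ^ m := by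
    rw [Finset.sum_congr rfl (fun i hi => by
      rcases h1 i with h | h
      · rw [h]
      · exact absurd h (mem_filter.mp hi).2), Finset.sum_const, smul_eq_mul]
    congr 1
    have := Finset.card_filter_add_card_filter_not (s := univ)
      (p := fun i : Fin l => f i = m + 1)
    simp only [Finset.card_univ, Fintype.card_fin] at this
    omega
  rw [e1, e2]

lemma exchange {l n : ℕ} (a : Fin l → ℕ) (hsum : ∑ i, a i = n)
    (h : ¬ ∀ i j, a i ≤ a j + 1) :
    ∃ a' : Fin l → ℕ, (∑ i, a' i = n) ∧ (∑ i, 2 ^ a' i < ∑ i, 2 ^ a i) := by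
  classical
  push_neg at h
  obtain ⟨i, j, hij⟩ := h
  have hne : j ≠ i := by rintro rfl; omega
  refine ⟨Function.update (Function.update a i (a i - 1)) j (a j + 1), ?_, ?_⟩
  · rw [Finset.sum_update_of_mem (mem_univ j), Finset.sum_update_of_mem (by simp [hne.symm] : i ∈ univ \ {j})]
    rw [Finset.sum_eq_add_sum_sdiff_singleton_of_mem (mem_univ j) a,
      Finset.sum_eq_add_sum_sdiff_singleton_of_mem (by simp [hne.symm] : i ∈ univ \ {j}) a] at hsum
    omega
  · have pu : ∀ (f : Fin l → ℕ) (i : Fin l) (v : ℕ),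
        (fun x => (2:ℕ) ^ (Function.update f i v x)) = Function.update (fun x => 2 ^ f x) i (2 ^ v) := by
      intro f i v; funext x
      by_cases h : x = i
      · subst h; simp
      · simp [Function.update_of_ne h]
    calc ∑ x, 2 ^ Function.update (Function.update a i (a i - 1)) j (a j + 1) x
        = ∑ x, Function.update (fun x => 2 ^ Function.update a i (a i - 1) x) j (2 ^ (a j + 1)) x := by
          rw [← pu]
      _ = 2 ^ (a j + 1) + ∑ x ∈ univ \ {j}, 2 ^ Function.update a i (a i - 1) x :=
          Finset.sum_update_of_mem (mem_univ j) _ _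
      _ = 2 ^ (a j + 1) + ∑ x ∈ univ \ {j}, Function.update (fun x => 2 ^ a x) i (2 ^ (a i - 1)) x := by
          rw [← pu]
      _ = 2 ^ (a j + 1) + (2 ^ (a i - 1) + ∑ x ∈ (univ \ {j}) \ {i}, 2 ^ a x) := by
          rw [Finset.sum_update_of_mem (by simp [hne.symm] : i ∈ univ \ {j}) _ _]
      _ < ∑ x, 2 ^ a x := by
          rw [Finset.sum_eq_add_sum_sdiff_singleton_of_mem (mem_univ j) (fun x => 2 ^ a x),
            Finset.sum_eq_add_sum_sdiff_singleton_of_mem (by simp [hne.symm] : i ∈ univ \ {j}) (fun x => 2 ^ a x)]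
          have h1 : 2 ^ (a j) < 2 ^ (a i - 1) := Nat.pow_lt_pow_right one_lt_two (by omega)
          have e1 : (2:ℕ) ^ (a j + 1) = 2 * 2 ^ (a j) := by rw [pow_succ]; ring
          have e2 : (2:ℕ) ^ (a i) = 2 * 2 ^ (a i - 1) := by
            conv_lhs => rw [show a i = (a i - 1) + 1 from by omega]
            rw [pow_succ]; ring
          omega


lemma conv_perm {l n : ℕ} (hl : 0 < l) (a b : Fin l → ℕ)
    (hsa : ∑ i, a i = n) (hsb : ∑ i, b i = n)
    (hba : ∀ i j, a i ≤ a j + 1) (hbb : ∀ i j, b i ≤ b j + 1) :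
    ∃ σ : Equiv.Perm (Fin l), ∀ i, a (σ i) = b i := by
  classical
  obtain ⟨ha1, ha2⟩ := balanced_char hl a hsa hba
  obtain ⟨hb1, hb2⟩ := balanced_char hl b hsb hbb
  set μ := n / l
  set Sa := univ.filter (fun i => a i = μ + 1) with hSa
  set Sb := univ.filter (fun i => b i = μ + 1) with hSb
  have hcard : Sa.card = Sb.card := by rw [ha2, hb2]
  have hcardc : Saᶜ.card = Sbᶜ.card := by rw [Finset.card_compl, Finset.card_compl, hcard]
  have e1 : {x // x ∈ Sa} ≃ {x // x ∈ Sb} := Finset.equivOfCardEq hcard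
  have e2 : {x // x ∈ Saᶜ} ≃ {x // x ∈ Sbᶜ} := Finset.equivOfCardEq hcardc
  have cb : {x // ¬ x ∈ Sb} ≃ {x // ¬ x ∈ Sa} :=
    (Equiv.subtypeEquivRight (fun x => (Finset.mem_compl (s := Sb)).symm)).trans
      (e2.symm.trans (Equiv.subtypeEquivRight (fun x => Finset.mem_compl (s := Sa))))
  refine ⟨(Equiv.sumCompl (· ∈ Sb)).symm.trans
    ((Equiv.sumCongr e1.symm cb).trans (Equiv.sumCompl (· ∈ Sa))), fun i => ?_⟩
  by_cases hi : i ∈ Sb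
  · rw [Equiv.trans_apply, Equiv.trans_apply, Equiv.sumCompl_symm_apply_of_pos hi]
    simp only [Equiv.sumCongr_apply, Sum.map_inl, Equiv.sumCompl_apply_inl]
    have hmem : ((e1.symm ⟨i, hi⟩ : {x // x ∈ Sa}) : Fin l) ∈ Sa := (e1.symm ⟨i, hi⟩).2
    have h1 : a ((e1.symm ⟨i, hi⟩ : {x // x ∈ Sa}) : Fin l) = μ + 1 := (mem_filter.mp hmem).2
    have h2 : b i = μ + 1 := (mem_filter.mp hi).2
    rw [h1, h2]
  · rw [Equiv.trans_apply, Equiv.trans_apply, Equiv.sumCompl_symm_apply_of_neg hi]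
    simp only [Equiv.sumCongr_apply, Sum.map_inr, Equiv.sumCompl_apply_inr]
    have hmem : ¬ ((cb ⟨i, hi⟩ : {x // ¬ x ∈ Sa}) : Fin l) ∈ Sa := (cb ⟨i, hi⟩).2
    have h1 : ¬ a ((cb ⟨i, hi⟩ : {x // ¬ x ∈ Sa}) : Fin l) = μ + 1 :=
      fun h => hmem (mem_filter.mpr ⟨mem_univ _, h⟩)
    have h2 : ¬ b i = μ + 1 := fun h => hi (mem_filter.mpr ⟨mem_univ _, h⟩)
    have h3 := ha1 ((cb ⟨i, hi⟩ : {x // ¬ x ∈ Sa}) : Fin l)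
    have h4 := hb1 i
    omega

lemma conv_ge {l n : ℕ} (hl : 0 < l) (b : Fin l → ℕ) (hsb : ∑ i, b i = n)
    (hbb : ∀ i j, b i ≤ b j + 1) :
    ∀ M (a : Fin l → ℕ), (∑ i, 2 ^ a i ≤ M) → (∑ i, a i = n) →
      ∑ i, 2 ^ b i ≤ ∑ i, 2 ^ a i := by
  intro M
  induction M using Nat.strong_induction_on with
  | _ M ih =>
    intro a hM hsum
    by_cases hbal : ∀ i j, a i ≤ a j + 1
    · obtain ⟨σ, hσ⟩ := conv_perm hl a b hsum hsb hbal hbb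
      have : ∑ i, 2 ^ b i = ∑ i, 2 ^ a (σ i) := by
        exact Finset.sum_congr rfl (fun i _ => by rw [hσ i])
      rw [this, Equiv.sum_comp σ (fun i => 2 ^ a i)]
    · obtain ⟨a', hs', hlt'⟩ := exchange a hsum hbal
      have h1 : ∑ i, 2 ^ a' i < M := lt_of_lt_of_le hlt' hM
      exact le_trans (ih _ h1 a' le_rfl hs') (le_of_lt hlt')

lemma conv_lt {l n : ℕ} (hl : 0 < l) (b : Fin l → ℕ) (hsb : ∑ i, b i = n)
    (hbb : ∀ i j, b i ≤ b j + 1) (a : Fin l → ℕ) (hsum : ∑ i, a i = n)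
    (hbal : ¬ ∀ i j, a i ≤ a j + 1) :
    ∑ i, 2 ^ b i < ∑ i, 2 ^ a i := by
  obtain ⟨a', hs', hlt'⟩ := exchange a hsum hbal
  exact lt_of_le_of_lt (conv_ge hl b hsb hbb _ a' le_rfl hs') hlt'


open SimpleGraph

variable {V : Type*} [Fintype V]

/-- complete multipartite graph associated to a colouring function -/
def mp {l : ℕ} (c : V → Fin l) : SimpleGraph V where
  Adj u v := c u ≠ c v
  symm := ⟨fun _ _ h => Ne.symm h⟩
  loopless := ⟨fun _ h => h rfl⟩

lemma eq_of_reachable_of_noAdj {W : Type*} {G : SimpleGraph W} (h : ∀ x y, ¬ G.Adj x y)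
    {x y : W} (hr : G.Reachable x y) : x = y := by
  obtain ⟨w⟩ := hr
  cases w with
  | nil => rfl
  | cons h' _ => exact absurd h' (h _ _)

lemma mp_connected {l : ℕ} (c : V → Fin l) {S : Set V} {u v : V} (hu : u ∈ S) (hv : v ∈ S)
    (huv : c u ≠ c v) : ((mp c).induce S).Connected := by
  rw [SimpleGraph.connected_iff]
  refine ⟨fun x y => ?_, ⟨⟨u, hu⟩⟩⟩
  obtain ⟨x, hx⟩ := x
  obtain ⟨y, hy⟩ := y
  by_cases hxy : c x = c y
  · have hw : ∃ w ∈ S, c w ≠ c x := by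
      by_cases h : c u = c x
      · exact ⟨v, hv, fun hc => huv (h.trans hc.symm)⟩
      · exact ⟨u, hu, h⟩
    obtain ⟨w, hw, hwx⟩ := hw
    have a1 : ((mp c).induce S).Adj ⟨x, hx⟩ ⟨w, hw⟩ := Ne.symm hwx
    have a2 : ((mp c).induce S).Adj ⟨w, hw⟩ ⟨y, hy⟩ := fun hc => hwx (hc.trans hxy.symm)
    exact a1.reachable.trans a2.reachable
  · exact (SimpleGraph.Adj.reachable (hxy : ((mp c).induce S).Adj ⟨x, hx⟩ ⟨y, hy⟩))

/-- the set of "bad" (nonempty, disconnected) subsets -/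
def badSet (G : SimpleGraph V) : Set (Set V) :=
  {S : Set V | S.Nonempty ∧ ¬ (G.induce S).Connected}

noncomputable def numBad (G : SimpleGraph V) : ℕ := Set.ncard (badSet G)

lemma mem_badSet_mp {l : ℕ} (c : V → Fin l) (S : Set V) :
    S ∈ badSet (mp c) ↔ (∃ i, S ⊆ c ⁻¹' {i}) ∧ 1 < S.ncard := by
  constructor
  · rintro ⟨hne, hnc⟩
    have hmono : ∀ x ∈ S, ∀ y ∈ S, c x = c y := by
      intro x hx y hy
      by_contra h
      exact hnc (mp_connected c hx hy h)
    obtain ⟨u, hu⟩ := hne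
    refine ⟨⟨c u, fun x hx => hmono x hx u hu⟩, ?_⟩
    by_contra h
    push_neg at h
    have hpos : 0 < S.ncard := (Set.ncard_pos (Set.toFinite S)).mpr ⟨u, hu⟩
    have h1 : S.ncard = 1 := by omega
    obtain ⟨a, ha⟩ := Set.ncard_eq_one.mp h1
    apply hnc
    rw [SimpleGraph.connected_iff]
    refine ⟨fun x y => ?_, ⟨⟨u, hu⟩⟩⟩
    obtain ⟨x, hx⟩ := x
    obtain ⟨y, hy⟩ := y
    have : x = y := by rw [ha] at hx hy; rw [hx, hy]
    subst this
    rfl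
  · rintro ⟨⟨i, hsub⟩, hcard⟩
    have hne : S.Nonempty := by
      rw [← Set.ncard_pos (Set.toFinite S)]
      omega
    refine ⟨hne, fun hc => ?_⟩
    obtain ⟨u, v, hu, hv, huv⟩ := Set.one_lt_ncard_iff (Set.toFinite S) |>.mp hcard
    have hr : ((mp c).induce S).Reachable ⟨u, hu⟩ ⟨v, hv⟩ := hc.preconnected _ _
    have : (⟨u, hu⟩ : S) = ⟨v, hv⟩ := by
      apply eq_of_reachable_of_noAdj ?_ hr
      rintro ⟨x, hx⟩ ⟨y, hy⟩ hadj
      have h1 : c x = i := hsub hx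
      have h2 : c y = i := hsub hy
      exact hadj (show c x = c y by rw [h1, h2])
    exact huv (by simpa using this)


lemma powerset_count (A : Finset V) :
    (A.powerset.filter fun t => 1 < t.card).card = 2 ^ A.card - 1 - A.card := by
  classical
  have htot := Finset.card_filter_add_card_filter_not (s := A.powerset)
    (p := fun t => 1 < t.card)
  have hpow : A.powerset.card = 2 ^ A.card := Finset.card_powerset A
  have hsmall : (A.powerset.filter fun t => ¬ 1 < t.card).card = 1 + A.card := by
    have he : (A.powerset.filter fun t => ¬ 1 < t.card) =
        (A.powerset.filter fun t => t.card = 0) ∪ (A.powerset.filter fun t => t.card = 1) := by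
      rw [← Finset.filter_or]
      apply Finset.filter_congr
      intro t _
      constructor
      · intro h; omega
      · intro h; omega
    have hdisj : Disjoint (A.powerset.filter fun t => t.card = 0)
        (A.powerset.filter fun t => t.card = 1) := by
      rw [Finset.disjoint_left]
      intro t h1 h2
      rw [Finset.mem_filter] at h1 h2
      omega
    rw [he, Finset.card_union_of_disjoint hdisj, ← Finset.powersetCard_eq_filter,
      ← Finset.powersetCard_eq_filter, Finset.card_powersetCard, Finset.card_powersetCard,
      Nat.choose_zero_right, Nat.choose_one_right]
  omega

lemma numBad_mp {l : ℕ} [DecidableEq (Fin l)] (c : V → Fin l) :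
    numBad (mp c) = ∑ i, (2 ^ (univ.filter fun v => c v = i).card - 1 -
      (univ.filter fun v => c v = i).card) := by
  classical
  set 𝔅 : Finset (Finset V) := univ.biUnion (fun i : Fin l =>
    ((univ.filter fun v => c v = i) : Finset V).powerset.filter fun t => 1 < t.card) with h𝔅
  have hmem : ∀ t : Finset V, t ∈ 𝔅 ↔ (∃ i, ∀ x ∈ t, c x = i) ∧ 1 < t.card := by
    intro t
    rw [h𝔅]
    simp only [Finset.mem_biUnion, Finset.mem_filter, Finset.mem_powerset, mem_univ, true_and]
    constructor
    · rintro ⟨i, hsub, hcard⟩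
      exact ⟨⟨i, fun x hx => (Finset.mem_filter.mp (hsub hx)).2⟩, hcard⟩
    · rintro ⟨⟨i, hall⟩, hcard⟩
      exact ⟨i, fun x hx => Finset.mem_filter.mpr ⟨mem_univ x, hall x hx⟩, hcard⟩
  have himg : badSet (mp c) = (fun t : Finset V => (↑t : Set V)) '' (𝔅 : Set (Finset V)) := by
    ext S
    rw [mem_badSet_mp]
    constructor
    · rintro ⟨⟨i, hsub⟩, hcard⟩
      have hS := Set.toFinite S
      refine ⟨hS.toFinset, ?_, hS.coe_toFinset⟩
      rw [Finset.mem_coe, hmem]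
      constructor
      · exact ⟨i, fun x hx => hsub (hS.mem_toFinset.mp hx)⟩
      · rwa [← Set.ncard_eq_toFinset_card S hS]
    · rintro ⟨t, ht, rfl⟩
      rw [Finset.mem_coe, hmem] at ht
      obtain ⟨⟨i, hall⟩, hcard⟩ := ht
      refine ⟨⟨i, fun x hx => hall x hx⟩, ?_⟩
      rwa [Set.ncard_coe_finset]
  have hdisj : ∀ i ∈ (univ : Finset (Fin l)), ∀ j ∈ univ, i ≠ j →
      Disjoint (((univ.filter fun v => c v = i) : Finset V).powerset.filter fun t => 1 < t.card)
        (((univ.filter fun v => c v = j) : Finset V).powerset.filter fun t => 1 < t.card) := by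
    intro i _ j _ hij
    rw [Finset.disjoint_left]
    intro t h1 h2
    rw [Finset.mem_filter, Finset.mem_powerset] at h1 h2
    obtain ⟨x, hx⟩ := Finset.card_pos.mp (by omega : 0 < t.card)
    exact hij ((Finset.mem_filter.mp (h1.1 hx)).2.symm.trans (Finset.mem_filter.mp (h2.1 hx)).2)
  rw [numBad, himg, Set.ncard_image_of_injective _ Finset.coe_injective, Set.ncard_coe_finset,
    h𝔅, Finset.card_biUnion hdisj]
  exact Finset.sum_congr rfl (fun i _ => powerset_count _)


noncomputable def numConn (G : SimpleGraph V) : ℕ :=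
  Set.ncard {S : Set V | S.Nonempty ∧ (G.induce S).Connected}

lemma numConn_add_numBad (G : SimpleGraph V) :
    numConn G + numBad G = 2 ^ Fintype.card V - 1 := by
  classical
  have hdisj : Disjoint {S : Set V | S.Nonempty ∧ (G.induce S).Connected} (badSet G) := by
    rw [Set.disjoint_left]
    rintro S ⟨h1, h2⟩ ⟨h3, h4⟩
    exact h4 h2
  have hunion : {S : Set V | S.Nonempty ∧ (G.induce S).Connected} ∪ badSet G
      = {(∅ : Set V)}ᶜ := by
    ext S
    simp only [Set.mem_union, Set.mem_setOf_eq, badSet, Set.mem_compl_iff, Set.mem_singleton_iff,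
      ← Set.nonempty_iff_ne_empty]
    tauto
  have hu := Set.ncard_union_eq hdisj (Set.toFinite _) (Set.toFinite _)
  rw [hunion] at hu
  have hcompl := Set.ncard_add_ncard_compl ({(∅ : Set V)} : Set (Set V))
    (Set.toFinite _) (Set.toFinite _)
  rw [Set.ncard_singleton] at hcompl
  have hcard : Nat.card (Set V) = 2 ^ Fintype.card V := by
    rw [Nat.card_eq_fintype_card, Fintype.card_set]
  rw [numConn, numBad]
  omega

lemma badSet_mono {G H : SimpleGraph V} (h : G ≤ H) : badSet H ⊆ badSet G := by
  rintro S ⟨hne, hnc⟩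
  refine ⟨hne, fun hc => hnc (SimpleGraph.Connected.mono ?_ hc)⟩
  intro a b hab
  exact h hab

def resMap (n : ℕ) {l : ℕ} (hl : 0 < l) : Fin n → Fin l :=
  fun x => ⟨(x : ℕ) % l, Nat.mod_lt _ hl⟩

lemma card_fiber_res {n l : ℕ} (hl : 0 < l) (i : Fin l) :
    ((univ : Finset (Fin n)).filter fun x => resMap n hl x = i).card
      = (n + (l - 1 - (i : ℕ))) / l := by
  classical
  rw [← Finset.card_range ((n + (l - 1 - (i : ℕ))) / l)]
  have hmem : ∀ x : Fin n, x ∈ (univ : Finset (Fin n)).filter (fun x => resMap n hl x = i)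
      ↔ (x : ℕ) % l = (i : ℕ) := by
    intro x
    simp only [Finset.mem_filter, mem_univ, true_and, resMap, Fin.ext_iff]
  refine Finset.card_bij' (fun x _ => (x : ℕ) / l) (fun q hq => ⟨q * l + (i : ℕ), ?_⟩)
    ?_ ?_ ?_ ?_
  · rw [Finset.mem_range] at hq
    exact (aux_arith hl i.isLt).mpr hq
  · intro x hx
    rw [hmem] at hx
    rw [Finset.mem_range]
    show (x : ℕ) / l < (n + (l - 1 - (i : ℕ))) / l
    have e : l * ((x : ℕ) / l) + (x : ℕ) % l = x := Nat.div_add_mod _ _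
    have e2 : (x : ℕ) / l * l = l * ((x : ℕ) / l) := Nat.mul_comm _ _
    refine (aux_arith hl i.isLt).mp ?_
    have : (x : ℕ) < n := x.isLt
    omega
  · intro q hq
    rw [hmem]
    have : (q * l + (i : ℕ)) % l = (i : ℕ) % l := by
      rw [Nat.mul_comm q l]
      exact Nat.mul_add_mod _ _ _
    rw [this, Nat.mod_eq_of_lt i.isLt]
  · intro x hx
    rw [hmem] at hx
    apply Fin.ext
    show (x : ℕ) / l * l + (i : ℕ) = (x : ℕ)
    have e : l * ((x : ℕ) / l) + (x : ℕ) % l = x := Nat.div_add_mod _ _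
    have e2 : (x : ℕ) / l * l = l * ((x : ℕ) / l) := Nat.mul_comm _ _
    omega
  · intro q hq
    show (q * l + (i : ℕ)) / l = q
    rw [Nat.mul_comm q l, Nat.mul_add_div hl, Nat.div_eq_of_lt i.isLt]
    omega


lemma sum_sub_eq {l n : ℕ} (f : Fin l → ℕ) (hs : ∑ i, f i = n) :
    ∑ i, (2 ^ f i - 1 - f i) + (n + l) = ∑ i, 2 ^ f i := by
  have key : ∀ i : Fin l, (2 ^ f i - 1 - f i) + (f i + 1) = 2 ^ f i := by
    intro i
    have := Nat.lt_two_pow_self (n := f i)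
    omega
  calc ∑ i, (2 ^ f i - 1 - f i) + (n + l)
      = ∑ i, (2 ^ f i - 1 - f i) + (∑ i, f i + ∑ _i : Fin l, 1) := by
        rw [hs, Finset.sum_const, Finset.card_univ, Fintype.card_fin, smul_eq_mul, mul_one]
    _ = ∑ i, ((2 ^ f i - 1 - f i) + (f i + 1)) := by
        rw [Finset.sum_add_distrib, Finset.sum_add_distrib]
    _ = ∑ i, 2 ^ f i := Finset.sum_congr rfl (fun i _ => key i)

end NCSAux

open NCSAux Finset in
/-- Among graphs of order `n` with chromatic number `l`, the Turán graph `T_{n,l}` is the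
unique maximiser of the number of connected induced subgraphs. -/
theorem numConnSub_lt_of_chromaticNumber {V : Type*} [Fintype V] (G : SimpleGraph V)
    (n l : ℕ) (hn : Fintype.card V = n) (hχ : G.chromaticNumber = (l : ℕ∞))
    (hiso : IsEmpty (G ≃g SimpleGraph.turanGraph n l)) :
    numConnSub G < numConnSub (SimpleGraph.turanGraph n l) := by
  classical
  by_cases hV : IsEmpty V
  · haveI := hV
    have hn0 : n = 0 := by rw [← hn]; exact Fintype.card_eq_zero
    haveI : IsEmpty (Fin n) := by rw [hn0]; infer_instance
    exact (hiso.false ⟨Equiv.equivOfIsEmpty V (Fin n), fun {a b} => isEmptyElim a⟩).elim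
  have hl : 0 < l := by
    by_contra h
    have hl0 : l = 0 := by omega
    subst hl0
    obtain ⟨C⟩ : G.Colorable 0 := chromaticNumber_le_iff_colorable.mp (le_of_eq hχ)
    exact hV (Function.isEmpty (fun v => C v))
  haveI : Nonempty V := not_isEmpty_iff.mp hV
  obtain ⟨C⟩ : G.Colorable l := chromaticNumber_le_iff_colorable.mp (le_of_eq hχ)
  set c : V → Fin l := fun v => C v with hc
  set a : Fin l → ℕ := fun i => (Finset.univ.filter fun v => c v = i).card with ha
  set b : Fin l → ℕ :=
    fun i => ((Finset.univ : Finset (Fin n)).filter fun x => resMap n hl x = i).card with hb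
  have hsa : ∑ i, a i = n := by
    have h0 := Finset.card_eq_sum_card_fiberwise
      (f := c) (s := Finset.univ) (t := Finset.univ) (fun x _ => Finset.mem_univ (c x))
    rw [Finset.card_univ, hn] at h0
    exact h0.symm
  have hsb : ∑ i, b i = n := by
    have h0 := Finset.card_eq_sum_card_fiberwise
      (f := resMap n hl) (s := Finset.univ) (t := Finset.univ) (fun x _ => Finset.mem_univ _)
    rw [Finset.card_univ, Fintype.card_fin] at h0
    exact h0.symm
  have hbb : ∀ i j, b i ≤ b j + 1 := by
    intro i j
    show ((Finset.univ : Finset (Fin n)).filter fun x => resMap n hl x = i).card ≤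
      ((Finset.univ : Finset (Fin n)).filter fun x => resMap n hl x = j).card + 1
    rw [card_fiber_res hl i, card_fiber_res hl j]
    exact bal_div l n hl i.isLt j.isLt
  have hTuran : SimpleGraph.turanGraph n l = mp (resMap n hl) := by
    ext v w
    show (v : ℕ) % l ≠ (w : ℕ) % l ↔ resMap n hl v ≠ resMap n hl w
    simp [resMap, Fin.ext_iff]
  have hbadT : numBad (turanGraph n l) = ∑ i, (2 ^ b i - 1 - b i) := by
    rw [hTuran, numBad_mp]
  have hGle : G ≤ mp c := fun {u v} h => C.valid h
  have hbadmp : numBad (mp c) = ∑ i, (2 ^ a i - 1 - a i) := numBad_mp c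
  have hge : ∑ i, 2 ^ b i ≤ ∑ i, 2 ^ a i := conv_ge hl b hsb hbb _ a le_rfl hsa
  have hTle : numBad (turanGraph n l) ≤ numBad (mp c) := by
    rw [hbadT, hbadmp]
    have e1 := sum_sub_eq b hsb
    have e2 := sum_sub_eq a hsa
    omega
  have hstrict : numBad (turanGraph n l) < numBad G := by
    by_cases hEq : G = mp c
    · by_cases hbal : ∀ i j, a i ≤ a j + 1
      · exfalso
        obtain ⟨σ, hσ⟩ := conv_perm hl a b hsa hsb hbal hbb
        set c' : V → Fin l := fun v => σ.symm (c v) with hc'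
        have hF : ∀ i : Fin l, Fintype.card {v // c' v = i}
            = Fintype.card {x : Fin n // resMap n hl x = i} := by
          intro i
          rw [Fintype.card_subtype, Fintype.card_subtype]
          have hfe : (Finset.univ.filter fun v => c' v = i)
              = (Finset.univ.filter fun v => c v = σ i) := by
            apply Finset.filter_congr
            intro v _
            show (σ.symm (c v) = i) ↔ (c v = σ i)
            exact Equiv.symm_apply_eq σ
          rw [hfe]
          have h1 : (Finset.univ.filter fun v => c v = σ i).card = a (σ i) := rfl
          rw [h1, hσ i]
        have F : ∀ i, {v // c' v = i} ≃ {x : Fin n // resMap n hl x = i} :=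
          fun i => Fintype.equivOfCardEq (hF i)
        set φ : V ≃ Fin n := (Equiv.sigmaFiberEquiv c').symm.trans
          ((Equiv.sigmaCongrRight F).trans (Equiv.sigmaFiberEquiv (resMap n hl))) with hφ
        have hkey : ∀ v, resMap n hl (φ v) = c' v := by
          intro v
          have h2 : φ v = ↑(F (c' v) ⟨v, rfl⟩) := rfl
          rw [h2]
          exact (F (c' v) ⟨v, rfl⟩).2
        refine hiso.false ⟨φ, ?_⟩
        intro u v
        show (turanGraph n l).Adj (φ u) (φ v) ↔ G.Adj u v
        rw [hTuran, hEq]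
        show resMap n hl (φ u) ≠ resMap n hl (φ v) ↔ c u ≠ c v
        rw [hkey u, hkey v]
        constructor
        · intro h hc2; exact h (show σ.symm (c u) = σ.symm (c v) by rw [hc2])
        · intro h hc2; exact h (σ.symm.injective hc2)
      · have hlt : ∑ i, 2 ^ b i < ∑ i, 2 ^ a i := conv_lt hl b hsb hbb a hsa hbal
        rw [hEq, hbadmp, hbadT]
        have e1 := sum_sub_eq b hsb
        have e2 := sum_sub_eq a hsa
        omega
    · have hmiss : ∃ u v, (mp c).Adj u v ∧ ¬ G.Adj u v := by
        by_contra h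
        push_neg at h
        exact hEq (le_antisymm hGle (fun {u v} hw => h u v hw))
      obtain ⟨u, v, hadj, hnadj⟩ := hmiss
      have huv : u ≠ v := hadj.ne
      have hS0G : ({u, v} : Set V) ∈ badSet G := by
        refine ⟨⟨u, by simp⟩, fun hcon => ?_⟩
        have hnoadj : ∀ x y : ({u, v} : Set V), ¬ (G.induce ({u, v} : Set V)).Adj x y := by
          rintro ⟨x, hx⟩ ⟨y, hy⟩ hxy
          have hgxy : G.Adj x y := hxy
          simp only [Set.mem_insert_iff, Set.mem_singleton_iff] at hx hy
          rcases hx with rfl | rfl <;> rcases hy with rfl | rfl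
          · exact G.irrefl hgxy
          · exact hnadj hgxy
          · exact hnadj hgxy.symm
          · exact G.irrefl hgxy
        have h3 := eq_of_reachable_of_noAdj hnoadj
          (hcon.preconnected ⟨u, by simp⟩ ⟨v, by simp⟩)
        exact huv (by simpa using h3)
      have hS0mp : ({u, v} : Set V) ∉ badSet (mp c) := by
        rintro ⟨-, hnc⟩
        exact hnc (mp_connected c (by simp) (by simp) hadj)
      have hss : badSet (mp c) ⊂ badSet G :=
        (Set.ssubset_iff_of_subset (badSet_mono hGle)).mpr ⟨_, hS0G, hS0mp⟩
      have h4 : numBad (mp c) < numBad G := Set.ncard_lt_ncard hss (Set.toFinite _)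
      omega
  have h1 := numConn_add_numBad G
  have h2 := numConn_add_numBad (turanGraph n l)
  rw [hn] at h1
  rw [Fintype.card_fin] at h2
  have e1 : numConnSub G = NCSAux.numConn G := rfl
  have e2 : numConnSub (SimpleGraph.turanGraph n l) = NCSAux.numConn (SimpleGraph.turanGraph n l) := rfl
  rw [e1, e2]
  omega
end

section
/- Let L, M, R be non-trivial connected graphs with pairwise disjoint vertex sets, l ∈ V(L), r ∈ V(R), and distinct u, v ∈ V(M). Let G be obtained by identifying l with u and r with v; let G' be obtained by identifying both l and r with u; let G'' be obtained by identifying both l and r with v. Then N(G') > N(G) or N(G'') > N(G). -/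
open SimpleGraph

/-- The graph obtained from `M` by attaching the graph `L` at the vertex `w` of `M`,
identifying the vertex `l` of `L` with `w`. -/
def attachAt {α β : Type*} (M : SimpleGraph α) (L : SimpleGraph β) (w : α) (l : β) :
    SimpleGraph (α ⊕ {x : β // x ≠ l}) :=
  SimpleGraph.fromRel (fun a b =>
    match a, b with
    | Sum.inl x, Sum.inl y => M.Adj x y
    | Sum.inl x, Sum.inr y => x = w ∧ L.Adj l y.1
    | Sum.inr y, Sum.inl x => x = w ∧ L.Adj l y.1
    | Sum.inr x, Sum.inr y => L.Adj x.1 y.1)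


section Transfer
variable {V W : Type*} {G : SimpleGraph V} {H : SimpleGraph W}

lemma reachable_transfer (f : V → W)
    (hf : ∀ a b, G.Adj a b → H.Adj (f a) (f b) ∨ f a = f b) {a b : V}
    (h : G.Reachable a b) : H.Reachable (f a) (f b) := by
  induction h with
  | _ p =>
    induction p with
    | nil => exact Reachable.refl _
    | cons hadj p ih =>
      rcases hf _ _ hadj with h' | h'
      · exact (Adj.reachable h').trans ih
      · rw [h']; exact ih

lemma connected_transfer (f : V → W) (hs : Function.Surjective f)
    (hf : ∀ a b, G.Adj a b → H.Adj (f a) (f b) ∨ f a = f b)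
    (hG : G.Connected) : H.Connected := by
  have hne : Nonempty V := hG.nonempty
  have : Nonempty W := ⟨f (Classical.arbitrary V)⟩
  refine ⟨fun a b => ?_⟩
  obtain ⟨a', rfl⟩ := hs a
  obtain ⟨b', rfl⟩ := hs b
  exact reachable_transfer f hf (hG.preconnected a' b')

lemma connected_of_subsingleton [Subsingleton V] [Nonempty V] : G.Connected :=
  ⟨fun a b => by rw [Subsingleton.elim a b]⟩

end Transfer

section AdjLemmas
variable {α β : Type*} {M : SimpleGraph α} {L : SimpleGraph β} {w : α} {l : β}

@[simp] lemma attachAt_adj_inl_inl {x y : α} :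
    (attachAt M L w l).Adj (Sum.inl x) (Sum.inl y) ↔ M.Adj x y := by
  constructor
  · rintro ⟨hne, h | h⟩
    · exact h
    · exact h.symm
  · intro h
    exact ⟨by simp [h.ne], Or.inl h⟩

@[simp] lemma attachAt_adj_inl_inr {x : α} {y : {b : β // b ≠ l}} :
    (attachAt M L w l).Adj (Sum.inl x) (Sum.inr y) ↔ x = w ∧ L.Adj l y.1 := by
  constructor
  · rintro ⟨hne, h | h⟩ <;> exact h
  · intro h
    exact ⟨by simp, Or.inl h⟩

@[simp] lemma attachAt_adj_inr_inl {x : α} {y : {b : β // b ≠ l}} :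
    (attachAt M L w l).Adj (Sum.inr y) (Sum.inl x) ↔ x = w ∧ L.Adj l y.1 := by
  rw [SimpleGraph.adj_comm, attachAt_adj_inl_inr]

@[simp] lemma attachAt_adj_inr_inr {x y : {b : β // b ≠ l}} :
    (attachAt M L w l).Adj (Sum.inr x) (Sum.inr y) ↔ L.Adj x.1 y.1 := by
  constructor
  · rintro ⟨hne, h | h⟩
    · exact h
    · exact h.symm
  · intro h
    refine ⟨fun e => h.ne (congrArg Subtype.val (Sum.inr.inj e)), Or.inl h⟩

end AdjLemmas

/-- The `α`-side of a vertex subset of an attached graph. -/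
def side1 {α γ : Type*} {r : γ} (S : Set (α ⊕ {x : γ // x ≠ r})) : Set α :=
  {a | Sum.inl a ∈ S}

/-- The `γ`-side of a vertex subset of an attached graph (not including `r`). -/
def side2 {α γ : Type*} {r : γ} (S : Set (α ⊕ {x : γ // x ≠ r})) : Set γ :=
  {x | ∃ h : x ≠ r, Sum.inr ⟨x, h⟩ ∈ S}

section Char
variable {α γ : Type*} {X : SimpleGraph α} {R : SimpleGraph γ} {w : α} {r : γ}

lemma cross_mem {S : Set (α ⊕ {x : γ // x ≠ r})} :
    ∀ {x y : S} (_ : ((attachAt X R w r).induce S).Walk x y) (a : α),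
      x.1 = Sum.inl a → ∀ b, y.1 = Sum.inr b → Sum.inl w ∈ S := by
  intro x y p
  induction p with
  | nil =>
    intro a ha b hb
    rw [ha] at hb; simp at hb
  | @cons x z y hadj p ih =>
    intro a ha b hb
    rcases hz : z.1 with a' | b'
    · exact ih a' hz b hb
    · have hadj' : (attachAt X R w r).Adj x.1 z.1 := hadj
      rw [ha, hz, attachAt_adj_inl_inr] at hadj'
      have : (Sum.inl w : α ⊕ {x : γ // x ≠ r}) = x.1 := by rw [ha, hadj'.1]
      rw [this]; exact x.2

lemma attach_induce_connected_iff (S : Set (α ⊕ {x : γ // x ≠ r})) :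
    ((attachAt X R w r).induce S).Connected ↔
      ((∀ y, Sum.inr y ∉ S) ∧ (side1 S).Nonempty ∧ (X.induce (side1 S)).Connected) ∨
      ((∀ a, Sum.inl a ∉ S) ∧ (∃ y, Sum.inr y ∈ S) ∧ (R.induce (side2 S)).Connected) ∨
      (Sum.inl w ∈ S ∧ (∃ y, Sum.inr y ∈ S) ∧ (X.induce (side1 S)).Connected ∧
        (R.induce (insert r (side2 S))).Connected) := by
  classical
  constructor
  · intro hc
    by_cases h2 : ∃ y, Sum.inr y ∈ S
    · by_cases h1 : ∃ a, Sum.inl a ∈ S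
      · -- mixed case
        obtain ⟨a₀, ha₀⟩ := h1
        obtain ⟨y₀, hy₀⟩ := h2
        have hw : Sum.inl w ∈ S := by
          obtain ⟨p⟩ := hc.preconnected ⟨Sum.inl a₀, ha₀⟩ ⟨Sum.inr y₀, hy₀⟩
          exact cross_mem p a₀ rfl y₀ rfl
        refine Or.inr (Or.inr ⟨hw, ⟨y₀, hy₀⟩, ?_, ?_⟩)
        · -- X-side connected
          refine connected_transfer (G := (attachAt X R w r).induce S)
            (fun z => ⟨Sum.elim id (fun _ => w) z.1, ?_⟩) ?_ ?_ hc
          · rcases hz : z.1 with a | y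
            · have := z.2; rw [hz] at this; simpa [hz, side1] using this
            · simpa [hz, side1] using hw
          · intro ⟨a, ha⟩
            exact ⟨⟨Sum.inl a, ha⟩, rfl⟩
          · rintro ⟨z₁, hz₁⟩ ⟨z₂, hz₂⟩ hadj
            have hadj' : (attachAt X R w r).Adj z₁ z₂ := hadj
            rcases z₁ with a₁ | y₁ <;> rcases z₂ with a₂ | y₂ <;>
              simp only [attachAt_adj_inl_inl, attachAt_adj_inl_inr, attachAt_adj_inr_inl,
                attachAt_adj_inr_inr] at hadj'
            · exact Or.inl hadj'
            · right; simp [hadj'.1]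
            · right; simp [hadj'.1]
            · right; simp
        · -- R-side connected
          refine connected_transfer (G := (attachAt X R w r).induce S)
            (fun z => ⟨Sum.elim (fun _ => r) (fun y => y.1) z.1, ?_⟩) ?_ ?_ hc
          · rcases hz : z.1 with a | y
            · simp [hz]
            · have := z.2; rw [hz] at this
              exact Set.mem_insert_of_mem _ ⟨y.2, by simpa using this⟩
          · rintro ⟨x, hx | hx⟩
            · exact ⟨⟨Sum.inl w, hw⟩, by simp [hx]⟩
            · obtain ⟨hxr, hmem⟩ := hx
              exact ⟨⟨Sum.inr ⟨x, hxr⟩, hmem⟩, by simp⟩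
          · rintro ⟨z₁, hz₁⟩ ⟨z₂, hz₂⟩ hadj
            have hadj' : (attachAt X R w r).Adj z₁ z₂ := hadj
            rcases z₁ with a₁ | y₁ <;> rcases z₂ with a₂ | y₂ <;>
              simp only [attachAt_adj_inl_inl, attachAt_adj_inl_inr, attachAt_adj_inr_inl,
                attachAt_adj_inr_inr] at hadj'
            · right; simp
            · left; simpa using hadj'.2
            · left; exact (by simpa using hadj'.2 : R.Adj r y₁.1).symm
            · left; exact hadj'
      · -- pure R case
        push_neg at h1
        obtain ⟨y₀, hy₀⟩ := h2
        refine Or.inr (Or.inl ⟨h1, ⟨y₀, hy₀⟩, ?_⟩)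
        refine connected_transfer (G := (attachAt X R w r).induce S)
          (fun z => ⟨Sum.elim (fun _ => y₀.1) (fun y => y.1) z.1, ?_⟩) ?_ ?_ hc
        · rcases hz : z.1 with a | y
          · have := z.2; rw [hz] at this; exact absurd this (h1 a)
          · have := z.2; rw [hz] at this
            exact ⟨y.2, by simpa using this⟩
        · rintro ⟨x, hxr, hmem⟩
          exact ⟨⟨Sum.inr ⟨x, hxr⟩, hmem⟩, by simp⟩
        · rintro ⟨z₁, hz₁⟩ ⟨z₂, hz₂⟩ hadj
          rcases z₁ with a₁ | y₁
          · exact absurd hz₁ (h1 a₁)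
          rcases z₂ with a₂ | y₂
          · exact absurd hz₂ (h1 a₂)
          have hadj' : (attachAt X R w r).Adj (Sum.inr y₁) (Sum.inr y₂) := hadj
          rw [attachAt_adj_inr_inr] at hadj'
          exact Or.inl hadj'
    · -- pure X case
      push_neg at h2
      have h1 : ∃ a, Sum.inl a ∈ S := by
        obtain ⟨⟨z, hz⟩⟩ := hc.nonempty
        rcases z with a | y
        · exact ⟨a, hz⟩
        · exact absurd hz (h2 y)
      obtain ⟨a₀, ha₀⟩ := h1
      refine Or.inl ⟨h2, ⟨a₀, ha₀⟩, ?_⟩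
      refine connected_transfer (G := (attachAt X R w r).induce S)
        (fun z => ⟨Sum.elim id (fun _ => a₀) z.1, ?_⟩) ?_ ?_ hc
      · rcases hz : z.1 with a | y
        · have := z.2; rw [hz] at this; simpa [side1] using this
        · have := z.2; rw [hz] at this; exact absurd this (h2 y)
      · intro ⟨a, ha⟩
        exact ⟨⟨Sum.inl a, ha⟩, rfl⟩
      · rintro ⟨z₁, hz₁⟩ ⟨z₂, hz₂⟩ hadj
        rcases z₁ with a₁ | y₁
        swap; · exact absurd hz₁ (h2 y₁)
        rcases z₂ with a₂ | y₂
        swap; · exact absurd hz₂ (h2 y₂)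
        have hadj' : (attachAt X R w r).Adj (Sum.inl a₁) (Sum.inl a₂) := hadj
        rw [attachAt_adj_inl_inl] at hadj'
        exact Or.inl hadj'
  · rintro (⟨h2, ⟨a₀, ha₀⟩, hconn⟩ | ⟨h1, ⟨y₀, hy₀⟩, hconn⟩ | ⟨hw, ⟨y₀, hy₀⟩, hconnX, hconnR⟩)
    · -- pure X
      refine connected_transfer (G := X.induce (side1 S))
        (fun a => ⟨Sum.inl a.1, a.2⟩) ?_ ?_ hconn
      · rintro ⟨z, hz⟩
        rcases z with a | y
        · exact ⟨⟨a, hz⟩, rfl⟩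
        · exact absurd hz (h2 y)
      · rintro ⟨a₁, h₁⟩ ⟨a₂, h₂⟩ hadj
        exact Or.inl (by simpa using hadj)
    · -- pure R
      refine connected_transfer (G := R.induce (side2 S))
        (fun x => ⟨Sum.inr ⟨x.1, x.2.1⟩, x.2.2⟩) ?_ ?_ hconn
      · rintro ⟨z, hz⟩
        rcases z with a | y
        · exact absurd hz (h1 a)
        · exact ⟨⟨y.1, y.2, by simpa using hz⟩, by simp⟩
      · rintro ⟨x₁, h₁⟩ ⟨x₂, h₂⟩ hadj
        exact Or.inl (by simpa using hadj)
    · -- mixed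
      have hwmem : (⟨Sum.inl w, hw⟩ : S) = ⟨Sum.inl w, hw⟩ := rfl
      have key : ∀ z : S, ((attachAt X R w r).induce S).Reachable z ⟨Sum.inl w, hw⟩ := by
        intro z
        rcases hz : z.1 with a | y
        · -- reach within X side
          have ha : a ∈ side1 S := by
            show Sum.inl a ∈ S
            rw [← hz]; exact z.2
          have hrw : (X.induce (side1 S)).Reachable ⟨a, ha⟩ ⟨w, hw⟩ :=
            hconnX.preconnected _ _
          have := reachable_transfer (G := X.induce (side1 S))
            (H := (attachAt X R w r).induce S)
            (fun b => ⟨Sum.inl b.1, b.2⟩)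
            (fun b₁ b₂ hadj => Or.inl (by simpa using hadj)) hrw
          have hzeq : z = ⟨Sum.inl a, ha⟩ := Subtype.ext hz
          rw [hzeq]; exact this
        · -- reach within R side
          have hy : y.1 ∈ insert r (side2 S) := by
            refine Set.mem_insert_of_mem _ ⟨y.2, ?_⟩
            rw [show (⟨y.1, y.2⟩ : {x : γ // x ≠ r}) = y from rfl, ← hz]; exact z.2
          have hrw : (R.induce (insert r (side2 S))).Reachable ⟨y.1, hy⟩
              ⟨r, Set.mem_insert _ _⟩ := hconnR.preconnected _ _
          have htrans := reachable_transfer (G := R.induce (insert r (side2 S)))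
            (H := (attachAt X R w r).induce S)
            (fun x => if hx : x.1 = r then ⟨Sum.inl w, hw⟩ else
              ⟨Sum.inr ⟨x.1, hx⟩, by
                rcases x.2 with h | h
                · exact absurd h hx
                · exact h.2⟩)
            ?_ hrw
          · simp only [dif_neg y.2, dif_pos rfl, dite_true] at htrans
            have hzeq : z = ⟨Sum.inr ⟨y.1, y.2⟩, by rw [show Sum.inr ⟨y.1, y.2⟩ = z.1 from hz.symm]; exact z.2⟩ :=
              Subtype.ext hz
            rw [hzeq]
            convert htrans using 2
          · rintro ⟨x₁, h₁⟩ ⟨x₂, h₂⟩ hadj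
            have hadj' : R.Adj x₁ x₂ := by simpa using hadj
            by_cases e₁ : x₁ = r <;> by_cases e₂ : x₂ = r
            · exact absurd (e₁ ▸ e₂ ▸ hadj') (R.irrefl)
            · left
              simp only [dif_pos e₁, dif_neg e₂]
              show (attachAt X R w r).Adj (Sum.inl w) (Sum.inr ⟨x₂, e₂⟩)
              rw [attachAt_adj_inl_inr]
              exact ⟨rfl, e₁ ▸ hadj'⟩
            · left
              simp only [dif_neg e₁, dif_pos e₂]
              show (attachAt X R w r).Adj (Sum.inr ⟨x₁, e₁⟩) (Sum.inl w)
              rw [attachAt_adj_inr_inl]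
              exact ⟨rfl, (e₂ ▸ hadj').symm⟩
            · left
              simp only [dif_neg e₁, dif_neg e₂]
              show (attachAt X R w r).Adj (Sum.inr ⟨x₁, e₁⟩) (Sum.inr ⟨x₂, e₂⟩)
              rw [attachAt_adj_inr_inr]
              exact hadj'
      haveI : Nonempty S := ⟨⟨Sum.inl w, hw⟩⟩
      exact ⟨fun z₁ z₂ => (key z₁).trans (key z₂).symm⟩
end Char

section Aux
variable {γ : Type*} [Fintype γ] (R : SimpleGraph γ) (r : γ)

noncomputable def cPure : ℕ :=
  Set.ncard {T : Set γ | T.Nonempty ∧ r ∉ T ∧ (R.induce T).Connected}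

noncomputable def cAtt : ℕ :=
  Set.ncard {T : Set γ | r ∈ T ∧ T ≠ {r} ∧ (R.induce T).Connected}

noncomputable def n2 (z : γ) : ℕ :=
  Set.ncard {S : Set γ | z ∈ S ∧ r ∈ S ∧ (R.induce S).Connected}

lemma ncard_set_prod {α β : Type*} (s : Set α) (t : Set β) :
    (s ×ˢ t).ncard = s.ncard * t.ncard := by
  rw [← Nat.card_coe_set_eq, Nat.card_congr (Equiv.Set.prod s t), Nat.card_prod,
    Nat.card_coe_set_eq, Nat.card_coe_set_eq]

lemma singleton_induce_connected : (R.induce ({r} : Set γ)).Connected := by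
  haveI : Subsingleton ({r} : Set γ) :=
    ⟨fun a b => Subtype.ext (by rw [a.2, b.2])⟩
  haveI : Nonempty ({r} : Set γ) := ⟨⟨r, rfl⟩⟩
  exact connected_of_subsingleton

lemma numConnSubAt_eq_cAtt_add_one : numConnSubAt R r = cAtt R r + 1 := by
  classical
  have hmem : ({r} : Set γ) ∈ {T : Set γ | r ∈ T ∧ (R.induce T).Connected} :=
    ⟨rfl, singleton_induce_connected R r⟩
  have hdiff : {T : Set γ | r ∈ T ∧ (R.induce T).Connected} \ {({r} : Set γ)} =
      {T : Set γ | r ∈ T ∧ T ≠ {r} ∧ (R.induce T).Connected} := by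
    ext T
    simp only [Set.mem_diff, Set.mem_setOf_eq, Set.mem_singleton_iff]
    tauto
  have h1 : Set.ncard ({T : Set γ | r ∈ T ∧ (R.induce T).Connected} \ {({r} : Set γ)}) =
      Set.ncard {T : Set γ | r ∈ T ∧ (R.induce T).Connected} - 1 :=
    Set.ncard_diff_singleton_of_mem hmem
  have hpos : 0 < Set.ncard {T : Set γ | r ∈ T ∧ (R.induce T).Connected} :=
    (Set.ncard_pos (Set.toFinite _)).mpr ⟨_, hmem⟩ 
  rw [numConnSubAt, cAtt, ← hdiff, h1]
  omega

lemma induce_univ_connected (h : R.Connected) : (R.induce (Set.univ : Set γ)).Connected :=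
  connected_transfer (fun x => ⟨x, trivial⟩) (fun ⟨x, _⟩ => ⟨x, rfl⟩)
    (fun a b hadj => Or.inl (by simpa using hadj)) h

lemma cAtt_pos (hR : R.Connected) (h1 : 1 < Fintype.card γ) : 0 < cAtt R r := by
  refine (Set.ncard_pos (Set.toFinite _)).mpr ⟨Set.univ, trivial, ?_, induce_univ_connected R hR⟩
  obtain ⟨x, hx⟩ := Fintype.exists_ne_of_one_lt_card h1 r
  intro e
  have hxr : x ∈ ({r} : Set γ) := by rw [← e]; trivial
  exact hx hxr

end Aux

section Count
variable {α γ : Type*} [DecidableEq γ]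

/-- Embed a set of `α` into the sum. -/
def emb1 (r : γ) (T : Set α) : Set (α ⊕ {x : γ // x ≠ r}) := Sum.inl '' T

/-- Embed a set of `γ` into the sum. -/
def emb2 (r : γ) (T : Set γ) : Set (α ⊕ {x : γ // x ≠ r}) :=
  Sum.inr '' {y : {x : γ // x ≠ r} | y.1 ∈ T}

/-- Embed a pair of sets into the sum. -/
def emb3 (r : γ) (p : Set α × Set γ) : Set (α ⊕ {x : γ // x ≠ r}) :=
  emb1 r p.1 ∪ emb2 r p.2

variable {r : γ}

@[simp] lemma mem_emb1_inl {T : Set α} {a : α} : Sum.inl a ∈ emb1 (α := α) r T ↔ a ∈ T := by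
  simp [emb1]

@[simp] lemma mem_emb1_inr {T : Set α} {y : {x : γ // x ≠ r}} :
    Sum.inr y ∈ emb1 (α := α) r T ↔ False := by
  simp [emb1]

@[simp] lemma mem_emb2_inl {T : Set γ} {a : α} : Sum.inl a ∈ emb2 (α := α) r T ↔ False := by
  simp [emb2]

@[simp] lemma mem_emb2_inr {T : Set γ} {y : {x : γ // x ≠ r}} :
    Sum.inr y ∈ emb2 (α := α) r T ↔ y.1 ∈ T := by
  simp [emb2]

@[simp] lemma mem_emb3_inl {p : Set α × Set γ} {a : α} :
    Sum.inl a ∈ emb3 (α := α) r p ↔ a ∈ p.1 := by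
  simp [emb3]

@[simp] lemma mem_emb3_inr {p : Set α × Set γ} {y : {x : γ // x ≠ r}} :
    Sum.inr y ∈ emb3 (α := α) r p ↔ y.1 ∈ p.2 := by
  simp [emb3]

@[simp] lemma mem_side1 {S : Set (α ⊕ {x : γ // x ≠ r})} {a : α} :
    a ∈ side1 S ↔ Sum.inl a ∈ S := Iff.rfl

@[simp] lemma mem_side2_val {S : Set (α ⊕ {x : γ // x ≠ r})} (y : {x : γ // x ≠ r}) :
    y.1 ∈ side2 S ↔ Sum.inr y ∈ S :=
  ⟨fun ⟨_, hm⟩ => hm, fun hm => ⟨y.2, hm⟩⟩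

lemma mem_side2 {S : Set (α ⊕ {x : γ // x ≠ r})} {x : γ} :
    x ∈ side2 S ↔ ∃ h : x ≠ r, Sum.inr ⟨x, h⟩ ∈ S := Iff.rfl

@[simp] lemma side1_emb1 {T : Set α} : side1 (emb1 (α := α) r T) = T := by
  ext a; simp

@[simp] lemma side1_emb2 {T : Set γ} : side1 (emb2 (α := α) r T) = ∅ := by
  ext a; simp [mem_side2]
  
@[simp] lemma side1_emb3 {p : Set α × Set γ} : side1 (emb3 (α := α) r p) = p.1 := by
  ext a; simp

lemma side2_emb2 {T : Set γ} (hr : r ∉ T) : side2 (emb2 (α := α) r T) = T := by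
  ext x
  simp only [mem_side2, mem_emb2_inr]
  constructor
  · rintro ⟨h, hm⟩; exact hm
  · intro hx; exact ⟨fun e => hr (e ▸ hx), hx⟩

lemma insert_side2_emb3 {p : Set α × Set γ} (hr : r ∈ p.2) :
    insert r (side2 (emb3 (α := α) r p)) = p.2 := by
  ext x
  simp only [Set.mem_insert_iff, mem_side2, mem_emb3_inr]
  constructor
  · rintro (rfl | ⟨h, hm⟩)
    · exact hr
    · exact hm
  · intro hx
    by_cases e : x = r
    · exact Or.inl e
    · exact Or.inr ⟨e, hx⟩

lemma exists_mem_ne {U : Set γ} (hr : r ∈ U) (hne : U ≠ {r}) : ∃ x, x ∈ U ∧ x ≠ r := by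
  by_contra h
  push_neg at h
  exact hne (Set.Subset.antisymm (fun x hx => h x hx) (Set.singleton_subset_iff.mpr hr))

variable (X : SimpleGraph α) (R : SimpleGraph γ) (w : α)

lemma conn_emb1 {T : Set α} (hT : T.Nonempty) (hc : (X.induce T).Connected) :
    ((attachAt X R w r).induce (emb1 r T)).Connected := by
  rw [attach_induce_connected_iff]
  left
  refine ⟨fun y hy => by simpa using hy, ?_, ?_⟩
  · rw [side1_emb1]; exact hT
  · rw [side1_emb1]; exact hc

lemma conn_emb2 {T : Set γ} (hr : r ∉ T) (hT : T.Nonempty) (hc : (R.induce T).Connected) :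
    ((attachAt X R w r).induce (emb2 r T)).Connected := by
  rw [attach_induce_connected_iff]
  right; left
  obtain ⟨x, hx⟩ := hT
  refine ⟨fun a ha => by simpa using ha, ⟨⟨x, fun e => hr (e ▸ hx)⟩, by simpa using hx⟩, ?_⟩
  rw [side2_emb2 hr]; exact hc

lemma conn_emb3 {p : Set α × Set γ} (hw : w ∈ p.1) (hr : r ∈ p.2) (hne : p.2 ≠ {r})
    (hcX : (X.induce p.1).Connected) (hcR : (R.induce p.2).Connected) :
    ((attachAt X R w r).induce (emb3 r p)).Connected := by
  rw [attach_induce_connected_iff]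
  right; right
  obtain ⟨x, hx, hxr⟩ := exists_mem_ne hr hne
  refine ⟨by simpa using hw, ⟨⟨x, hxr⟩, by simpa using hx⟩, ?_, ?_⟩
  · rw [side1_emb3]; exact hcX
  · rw [insert_side2_emb3 hr]; exact hcR

lemma emb1_side1 {S : Set (α ⊕ {x : γ // x ≠ r})} (h2 : ∀ y, Sum.inr y ∉ S) :
    emb1 (α := α) r (side1 S) = S := by
  ext z
  rcases z with a | y
  · simp
  · simp [h2 y]

lemma emb2_side2 {S : Set (α ⊕ {x : γ // x ≠ r})} (h1 : ∀ a, Sum.inl a ∉ S) :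
    emb2 (α := α) r (side2 S) = S := by
  ext z
  rcases z with a | y
  · simp [h1 a]
  · simp

lemma emb3_eq {S : Set (α ⊕ {x : γ // x ≠ r})} :
    emb3 (α := α) r (side1 S, insert r (side2 S)) = S := by
  ext z
  rcases z with a | y
  · simp
  · simp [y.2]
end Count

section Main
variable {α γ : Type*} [Fintype α] [Fintype γ] [DecidableEq γ]
variable (X : SimpleGraph α) (R : SimpleGraph γ) (w : α) (r : γ)

lemma emb1_injective : Function.Injective (emb1 (α := α) r) :=
  Set.image_injective.mpr Sum.inl_injective

lemma emb2_injOn : Set.InjOn (emb2 (α := α) r) {T : Set γ | r ∉ T} := by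
  rintro T₁ h₁ T₂ h₂ he
  ext x
  constructor
  · intro hx
    have hxr : x ≠ r := fun e => h₁ (e ▸ hx)
    have : Sum.inr ⟨x, hxr⟩ ∈ emb2 (α := α) r T₁ := by simpa using hx
    rw [he] at this; simpa using this
  · intro hx
    have hxr : x ≠ r := fun e => h₂ (e ▸ hx)
    have : Sum.inr ⟨x, hxr⟩ ∈ emb2 (α := α) r T₂ := by simpa using hx
    rw [← he] at this; simpa using this

lemma emb3_injOn : Set.InjOn (emb3 (α := α) r) {p : Set α × Set γ | r ∈ p.2} := by
  rintro p h₁ q h₂ he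
  have e1 : p.1 = q.1 := by
    ext a
    have := Set.ext_iff.mp he (Sum.inl a)
    simpa using this
  have e2 : p.2 = q.2 := by
    ext x
    by_cases hxr : x = r
    · subst hxr; exact iff_of_true h₁ h₂
    · have := Set.ext_iff.mp he (Sum.inr ⟨x, hxr⟩)
      simpa using this
  exact Prod.ext e1 e2

lemma numConnSub_attachAt_eq :
    numConnSub (attachAt X R w r) =
      numConnSub X + cPure R r + numConnSubAt X w * cAtt R r := by
  classical
  have hset : {S : Set (α ⊕ {x : γ // x ≠ r}) | S.Nonempty ∧
        ((attachAt X R w r).induce S).Connected} =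
      (emb1 r '' {T : Set α | T.Nonempty ∧ (X.induce T).Connected}) ∪
      (emb2 r '' {T : Set γ | T.Nonempty ∧ r ∉ T ∧ (R.induce T).Connected}) ∪
      (emb3 r '' ({T : Set α | w ∈ T ∧ (X.induce T).Connected} ×ˢ
        {T : Set γ | r ∈ T ∧ T ≠ {r} ∧ (R.induce T).Connected})) := by
    ext S
    simp only [Set.mem_setOf_eq, Set.mem_union, Set.mem_image, Set.mem_prod, Prod.exists]
    constructor
    · rintro ⟨hne, hconn⟩
      rw [attach_induce_connected_iff] at hconn
      rcases hconn with ⟨h2, hne1, hc1⟩ | ⟨h1, ⟨y₀, hy₀⟩, hc2⟩ | ⟨hw, ⟨y₀, hy₀⟩, hcX, hcR⟩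
      · exact Or.inl (Or.inl ⟨side1 S, ⟨hne1, hc1⟩, emb1_side1 h2⟩)
      · refine Or.inl (Or.inr ⟨side2 S, ⟨⟨y₀.1, (mem_side2_val y₀).mpr hy₀⟩, ?_, hc2⟩,
          emb2_side2 h1⟩)
        rintro ⟨h, _⟩
        exact h rfl
      · refine Or.inr ⟨side1 S, insert r (side2 S),
          ⟨⟨hw, hcX⟩, Set.mem_insert _ _, ?_, hcR⟩, emb3_eq⟩
        intro e
        have : y₀.1 ∈ insert r (side2 S) := Set.mem_insert_of_mem _ ((mem_side2_val y₀).mpr hy₀)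
        rw [e] at this
        exact y₀.2 (by simpa using this)
    · rintro ((⟨T, ⟨hTne, hTc⟩, rfl⟩ | ⟨T, ⟨hTne, hTr, hTc⟩, rfl⟩) |
        ⟨T, U, ⟨⟨hTw, hTc⟩, hUr, hUne, hUc⟩, rfl⟩)
      · obtain ⟨a, ha⟩ := hTne
        exact ⟨⟨Sum.inl a, by simpa using ha⟩, conn_emb1 X R w ⟨a, ha⟩ hTc⟩
      · obtain ⟨x, hx⟩ := hTne
        refine ⟨⟨Sum.inr ⟨x, fun e => hTr (e ▸ hx)⟩, by simpa using hx⟩,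
          conn_emb2 X R w hTr ⟨x, hx⟩ hTc⟩
      · exact ⟨⟨Sum.inl w, by simpa using hTw⟩,
          conn_emb3 X R w (p := (T, U)) hTw hUr hUne hTc hUc⟩
  have d12 : Disjoint (emb1 r '' {T : Set α | T.Nonempty ∧ (X.induce T).Connected})
      (emb2 r '' {T : Set γ | T.Nonempty ∧ r ∉ T ∧ (R.induce T).Connected}) := by
    rw [Set.disjoint_left]
    rintro S ⟨T, ⟨⟨a, ha⟩, _⟩, rfl⟩ ⟨U, hU, he⟩
    have h1 : Sum.inl a ∈ emb1 (α := α) r T := by simpa using ha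
    rw [← he] at h1
    simpa using h1
  have d3 : Disjoint ((emb1 r '' {T : Set α | T.Nonempty ∧ (X.induce T).Connected}) ∪
      (emb2 r '' {T : Set γ | T.Nonempty ∧ r ∉ T ∧ (R.induce T).Connected}))
      (emb3 r '' ({T : Set α | w ∈ T ∧ (X.induce T).Connected} ×ˢ
        {T : Set γ | r ∈ T ∧ T ≠ {r} ∧ (R.induce T).Connected})) := by
    rw [Set.disjoint_left]
    rintro S (⟨T, _, rfl⟩ | ⟨T, ⟨_, hTr, _⟩, rfl⟩) ⟨⟨T', U⟩, ⟨⟨hTw, _⟩, hUr, hUne, _⟩, he⟩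
    · obtain ⟨x, hx, hxr⟩ := exists_mem_ne hUr hUne
      have : Sum.inr ⟨x, hxr⟩ ∈ emb3 (α := α) r (T', U) := by simpa using hx
      rw [he] at this
      simpa using this
    · have : Sum.inl w ∈ emb3 (α := α) r (T', U) := by simpa using hTw
      rw [he] at this
      simpa using this
  rw [numConnSub, hset, Set.ncard_union_eq d3 (Set.toFinite _) (Set.toFinite _),
    Set.ncard_union_eq d12 (Set.toFinite _) (Set.toFinite _),
    Set.ncard_image_of_injective _ (emb1_injective (α := α) r),
    Set.ncard_image_of_injOn ((emb2_injOn (α := α) r).mono (fun T hT => hT.2.1)),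
    Set.ncard_image_of_injOn ((emb3_injOn (α := α) r).mono
      (fun p hp => hp.2.1)),
    ncard_set_prod]
  rfl

lemma numConnSubAt_attachAt_inl (z : α) :
    numConnSubAt (attachAt X R w r) (Sum.inl z) =
      numConnSubAt X z + n2 X z w * cAtt R r := by
  classical
  have hset : {S : Set (α ⊕ {x : γ // x ≠ r}) | Sum.inl z ∈ S ∧
        ((attachAt X R w r).induce S).Connected} =
      (emb1 r '' {T : Set α | z ∈ T ∧ (X.induce T).Connected}) ∪
      (emb3 r '' ({T : Set α | w ∈ T ∧ z ∈ T ∧ (X.induce T).Connected} ×ˢ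
        {T : Set γ | r ∈ T ∧ T ≠ {r} ∧ (R.induce T).Connected})) := by
    ext S
    simp only [Set.mem_setOf_eq, Set.mem_union, Set.mem_image, Set.mem_prod, Prod.exists]
    constructor
    · rintro ⟨hz, hconn⟩
      rw [attach_induce_connected_iff] at hconn
      rcases hconn with ⟨h2, hne1, hc1⟩ | ⟨h1, _, _⟩ | ⟨hw, ⟨y₀, hy₀⟩, hcX, hcR⟩
      · exact Or.inl ⟨side1 S, ⟨hz, hc1⟩, emb1_side1 h2⟩
      · exact absurd hz (h1 z)
      · refine Or.inr ⟨side1 S, insert r (side2 S),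
          ⟨⟨hw, hz, hcX⟩, Set.mem_insert _ _, ?_, hcR⟩, emb3_eq⟩
        intro e
        have : y₀.1 ∈ insert r (side2 S) := Set.mem_insert_of_mem _ ((mem_side2_val y₀).mpr hy₀)
        rw [e] at this
        exact y₀.2 (by simpa using this)
    · rintro (⟨T, ⟨hTz, hTc⟩, rfl⟩ | ⟨T, U, ⟨⟨hTw, hTz, hTc⟩, hUr, hUne, hUc⟩, rfl⟩)
      · exact ⟨by simpa using hTz, conn_emb1 X R w ⟨z, hTz⟩ hTc⟩
      · exact ⟨by simpa using hTz, conn_emb3 X R w (p := (T, U)) hTw hUr hUne hTc hUc⟩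
  have d13 : Disjoint (emb1 r '' {T : Set α | z ∈ T ∧ (X.induce T).Connected})
      (emb3 r '' ({T : Set α | w ∈ T ∧ z ∈ T ∧ (X.induce T).Connected} ×ˢ
        {T : Set γ | r ∈ T ∧ T ≠ {r} ∧ (R.induce T).Connected})) := by
    rw [Set.disjoint_left]
    rintro S ⟨T, _, rfl⟩ ⟨⟨T', U⟩, ⟨_, hUr, hUne, _⟩, he⟩
    obtain ⟨x, hx, hxr⟩ := exists_mem_ne hUr hUne
    have : Sum.inr ⟨x, hxr⟩ ∈ emb3 (α := α) r (T', U) := by simpa using hx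
    rw [he] at this
    simpa using this
  rw [numConnSubAt, hset, Set.ncard_union_eq d13 (Set.toFinite _) (Set.toFinite _),
    Set.ncard_image_of_injective _ (emb1_injective (α := α) r),
    Set.ncard_image_of_injOn ((emb3_injOn (α := α) r).mono (fun p hp => hp.2.1)),
    ncard_set_prod]
  rfl

end Main

lemma n2_self {α : Type*} [Fintype α] (X : SimpleGraph α) (z : α) :
    n2 X z z = numConnSubAt X z := by
  unfold n2 numConnSubAt
  congr 1
  ext S
  simp only [Set.mem_setOf_eq]
  tauto


/-- Let `L, M, R` be non-trivial connected graphs, `l ∈ V(L)`, `r ∈ V(R)`, and distinct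
`u, v ∈ V(M)`.  Let `G` identify `l` with `u` and `r` with `v`, let `G'` identify both
`l, r` with `u`, and let `G''` identify both `l, r` with `v`.  Then
`N(G') > N(G)` or `N(G'') > N(G)`. -/
theorem numConnSub_attach {α β γ : Type*} [Fintype α] [Fintype β] [Fintype γ]
    [DecidableEq β] [DecidableEq γ]
    (M : SimpleGraph α) (L : SimpleGraph β) (R : SimpleGraph γ)
    (u v : α) (l : β) (r : γ) (huv : u ≠ v)
    (hM : M.Connected) (hL : L.Connected) (hR : R.Connected)
    (hMn : 1 < Fintype.card α) (hLn : 1 < Fintype.card β) (hRn : 1 < Fintype.card γ) :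
    numConnSub (attachAt (attachAt M L u l) R (Sum.inl u) r) >
        numConnSub (attachAt (attachAt M L u l) R (Sum.inl v) r) ∨
      numConnSub (attachAt (attachAt M L v l) R (Sum.inl v) r) >
        numConnSub (attachAt (attachAt M L u l) R (Sum.inl v) r) := by
  classical
  have eG : numConnSub (attachAt (attachAt M L u l) R (Sum.inl v) r) =
      (numConnSub M + cPure L l + numConnSubAt M u * cAtt L l) + cPure R r +
        (numConnSubAt M v + n2 M v u * cAtt L l) * cAtt R r := by
    rw [numConnSub_attachAt_eq, numConnSubAt_attachAt_inl, numConnSub_attachAt_eq]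
  have eG' : numConnSub (attachAt (attachAt M L u l) R (Sum.inl u) r) =
      (numConnSub M + cPure L l + numConnSubAt M u * cAtt L l) + cPure R r +
        (numConnSubAt M u + numConnSubAt M u * cAtt L l) * cAtt R r := by
    rw [numConnSub_attachAt_eq, numConnSubAt_attachAt_inl, numConnSub_attachAt_eq, n2_self]
  have eG'' : numConnSub (attachAt (attachAt M L v l) R (Sum.inl v) r) =
      (numConnSub M + cPure L l + numConnSubAt M v * cAtt L l) + cPure R r +
        (numConnSubAt M v + numConnSubAt M v * cAtt L l) * cAtt R r := by
    rw [numConnSub_attachAt_eq, numConnSubAt_attachAt_inl, numConnSub_attachAt_eq, n2_self]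
  rw [eG, eG', eG'']
  set A1 := numConnSubAt M u with hA1
  set A2 := numConnSubAt M v with hA2
  set B := n2 M v u with hB
  set KL := cAtt L l with hKL
  set K := cAtt R r with hK
  have hKLpos : 0 < KL := cAtt_pos L l hL hLn
  have hKpos : 0 < K := cAtt_pos R r hR hRn
  have hBA1 : B < A1 := by
    rw [hB, hA1, n2, numConnSubAt]
    refine Set.ncard_lt_ncard ⟨fun S hS => ⟨hS.1, hS.2.2⟩, ?_⟩ (Set.toFinite _)
    intro hsub
    have : ({u} : Set α) ∈ {S : Set α | u ∈ S ∧ v ∈ S ∧ (M.induce S).Connected} :=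
      hsub ⟨rfl, singleton_induce_connected M u⟩
    exact huv (this.2.1).symm
  have hBA2 : B < A2 := by
    rw [hB, hA2, n2, numConnSubAt]
    refine Set.ncard_lt_ncard ⟨fun S hS => ⟨hS.2.1, hS.2.2⟩, ?_⟩ (Set.toFinite _)
    intro hsub
    have : ({v} : Set α) ∈ {S : Set α | u ∈ S ∧ v ∈ S ∧ (M.induce S).Connected} :=
      hsub ⟨rfl, singleton_induce_connected M v⟩
    exact huv this.1
  rcases le_or_gt A2 A1 with hle | hlt
  · left
    have inner : A2 + B * KL < A1 + A1 * KL :=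
      add_lt_add_of_le_of_lt hle (mul_lt_mul_of_pos_right hBA1 hKLpos)
    have := mul_lt_mul_of_pos_right inner hKpos
    omega
  · right
    have i1 : A1 * KL < A2 * KL := mul_lt_mul_of_pos_right hlt hKLpos
    have i2 : (A2 + B * KL) * K ≤ (A2 + A2 * KL) * K :=
      Nat.mul_le_mul_right _ (add_le_add_right (Nat.mul_le_mul_right _ hBA2.le) _)
    omega
end
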